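/- arXiv:1007.0862 — 5 statements merged into one kernel-verified Lean document; each statement's English description precedes it below -/
import Mathlib

section
/- For every A ⊆ V_n with |A| = m and every choice of vertices σ^{i_1}, …, σ^{i_k} ∈ T_m, one has P_n( [ψ(A)](σ^{i_1}) = … = [ψ(A)](σ^{i_k}) = 1 ) ≤ ( (m + rm + … + r^g m)/(n − r) )^k. -/
open MeasureTheory
open scoped ENNReal
/-- A directed-graph structure on `V_n = Fin n`: each vertex `x` has an ordered `r`-tuple
of distinct input vertices `y_1(x), …, y_r(x)`, all different from `x`. -/
def IsGraph {n r : ℕ} (y : Fin n → Fin r → Fin n) : Prop :=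
  ∀ x, Function.Injective (y x) ∧ ∀ i, y x i ≠ x

/-- The uniform probability measure on the space of graph structures (the tuples are chosen
uniformly and independently for each vertex, which is the same as choosing the whole
structure uniformly). -/
noncomputable def graphMeasure (n r : ℕ) : Measure {y : Fin n → Fin r → Fin n // IsGraph y} :=
  (Nat.card {y : Fin n → Fin r → Fin n // IsGraph y} : ℝ≥0∞)⁻¹ • Measure.count

/-- `μ` is the joint law of i.i.d. Bernoulli(q) random variables indexed by `Fin n × ℕ`
(this property characterizes the product measure uniquely). -/
def IsBernoulliProduct (q : ℝ) {n : ℕ} (μ : Measure (Fin n → ℕ → Bool)) : Prop :=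
  ∀ (S : Finset (Fin n × ℕ)) (v : Fin n × ℕ → Bool),
    μ {ω | ∀ p ∈ S, ω p.1 p.2 = v p} =
      ∏ p ∈ S, (if v p then ENNReal.ofReal q else ENNReal.ofReal (1 - q))

/-- The threshold contact process on the graph `y`, driven by `B`, started from `ξ0`:
`ξ_{t+1}(x) = 1` iff `B x (t+1) = 1` and `ξ_t(y_i(x)) = 1` for some `i`. -/
def xi {n r : ℕ} (y : Fin n → Fin r → Fin n) (B : Fin n → ℕ → Bool)
    (ξ0 : Fin n → Bool) : ℕ → Fin n → Bool
  | 0 => ξ0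
  | t + 1 => fun x => B x (t + 1) && decide (∃ i : Fin r, xi y B ξ0 t (y x i) = true)

/-- The dual threshold contact process: `ξ̂_{t+1}(x) = 1` iff there are `z` and `i` with
`y_i(z) = x`, `ξ̂_t(z) = 1` and `B z t = 1`. -/
def xihat {n r : ℕ} (y : Fin n → Fin r → Fin n) (B : Fin n → ℕ → Bool)
    (ξ0 : Fin n → Bool) : ℕ → Fin n → Bool
  | 0 => ξ0
  | t + 1 => fun x =>
      decide (∃ z, ∃ i : Fin r, y z i = x ∧ xihat y B ξ0 t z = true ∧ B z t = true)

/-- The number of occupied sites of a configuration. -/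
def numOnes {n : ℕ} (ξ : Fin n → Bool) : ℕ := (Finset.univ.filter fun x => ξ x = true).card

/-- The joint law `P_n` of the random graph and the Bernoulli variables. -/
noncomputable def Pn (n r : ℕ) (μB : Measure (Fin n → ℕ → Bool)) :
    Measure ({y : Fin n → Fin r → Fin n // IsGraph y} × (Fin n → ℕ → Bool)) :=
  (graphMeasure n r).prod μB

/-- A vertex of the forest `T_m`: a root index in `Fin m` together with a path of length
`i ≤ g` with steps in `Fin r`. -/
abbrev Tvert (m g r : ℕ) := Fin m × Σ i : Fin (g + 1), (Fin (i : ℕ) → Fin r)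

namespace Tvert

/-- The generation (path length) of a vertex of `T_m`. -/
def len {m g r : ℕ} (σ : Tvert m g r) : ℕ := σ.2.1

/-- Truncation of `σ` to path length `l` (for `l ≤ len σ`): the prefix `(σ_0, …, σ_l)`. -/
def trunc {m g r : ℕ} (σ : Tvert m g r) (l : ℕ) : Tvert m g r :=
  ⟨σ.1, ⟨⟨min l (len σ), lt_of_le_of_lt (min_le_right _ _) σ.2.1.2⟩,
    fun k => σ.2.2 ⟨k, lt_of_lt_of_le k.2 (min_le_right _ _)⟩⟩⟩

/-- The tuple `(σ_0, σ_1, …, σ_i)` of a vertex, as a list of naturals. -/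
def key {m g r : ℕ} (σ : Tvert m g r) : List ℕ :=
  (σ.1 : ℕ) :: (List.ofFn σ.2.2).map Fin.val

/-- The order `≺` on `T_m`: shorter vertices first; among vertices of the same length,
lexicographic order on the tuple `(σ_0, …, σ_i)`. -/
def prec {m g r : ℕ} (σ σ' : Tvert m g r) : Prop :=
  len σ < len σ' ∨ (len σ = len σ' ∧ List.Lex (· < ·) (key σ) (key σ'))

/-- `σ → σ'` iff `σ' = (σ, j)` for some `j`, i.e. `σ'` extends `σ` by one step. -/
def edge {m g r : ℕ} (σ σ' : Tvert m g r) : Prop :=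
  len σ' = len σ + 1 ∧ trunc σ' (len σ) = σ

open scoped Classical in
/-- `J(B)`: the set of vertices reachable by one directed edge from `B`. -/
noncomputable def J {m g r : ℕ} (B : Finset (Tvert m g r)) : Finset (Tvert m g r) :=
  Finset.univ.filter fun σ' => ∃ σ ∈ B, edge σ σ'

end Tvert

/-- `z^σ = y_{σ_i}(y_{σ_{i-1}}(⋯ y_{σ_1}(x_{σ_0})⋯))`, where `x_1 < … < x_m` enumerates `A`. -/
noncomputable def zvert {n r m g : ℕ} (y : Fin n → Fin r → Fin n)
    (A : Finset (Fin n)) (hA : A.card = m) (σ : Tvert m g r) : Fin n :=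
  (List.ofFn σ.2.2).foldl (fun v j => y v j) (A.orderIsoOfFin hA σ.1 : Fin n)

open scoped Classical in
/-- `A^σ = {z^{σ'} : σ' ≺ σ}`. -/
noncomputable def Aseen {n r m g : ℕ} (y : Fin n → Fin r → Fin n)
    (A : Finset (Fin n)) (hA : A.card = m) (σ : Tvert m g r) : Finset (Fin n) :=
  (Finset.univ.filter fun σ' => Tvert.prec σ' σ).image (zvert y A hA)

open scoped Classical in
/-- The configuration `ψ(A) ∈ {0,1}^{T_m}`: roots get `0`; a non-root vertex `σ` gets `0`
if a strict prefix of `σ` already has value `1` or if `z^σ ∉ A^σ`, and gets `1` otherwise. -/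
noncomputable def psi {n r m g : ℕ} (y : Fin n → Fin r → Fin n)
    (A : Finset (Fin n)) (hA : A.card = m) : Tvert m g r → Bool := fun σ =>
  if h0 : Tvert.len σ = 0 then false
  else
    decide (zvert y A hA σ ∈ Aseen y A hA σ) &&
      !(List.range (Tvert.len σ)).any fun l =>
        if hl : l < Tvert.len σ then psi y A hA (Tvert.trunc σ l) else false
termination_by σ => Tvert.len σ
decreasing_by
  simp only [Tvert.trunc, Tvert.len]
  exact lt_of_le_of_lt (min_le_left _ _) hl

namespace Tvert

/-- `(B_0, …, B_i)` is a family: `B_0 ⊆ T⁰_m` and `B_{j+1} ⊆ J(B_j)` for `j < i`. -/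
def IsFamily {m g r : ℕ} (i : ℕ) (Bs : ℕ → Finset (Tvert m g r)) : Prop :=
  i < g ∧ (∀ σ ∈ Bs 0, len σ = 0) ∧ ∀ j < i, Bs (j + 1) ⊆ J (Bs j)

open scoped Classical in
/-- The part of `J(B)` on which `ψ` vanishes. -/
noncomputable def Jzero {m g r : ℕ} (ψ : Tvert m g r → Bool) (B : Finset (Tvert m g r)) :
    Finset (Tvert m g r) :=
  (J B).filter fun σ => ψ σ = false

/-- A family `(B_0, …, B_i)` is `ψ`-admissible. -/
def IsAdmissible {m g r : ℕ} (qt : ℝ) (ψ : Tvert m g r → Bool)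
    (i : ℕ) (Bs : ℕ → Finset (Tvert m g r)) : Prop :=
  IsFamily (g := g) i Bs ∧
    (∀ j ≤ i, ∀ σ ∈ Bs j, ψ σ = false) ∧
    (qt * m ≤ (Bs 0).card) ∧
    ∀ j < i, qt * (Jzero ψ (Bs j)).card ≤ (Bs (j + 1)).card

/-- A family `(B_0, …, B_i)` is `ψ`-good: it is `ψ`-admissible and in addition
`|J(B_j) ∩ {ψ = 0}| ≥ (q̃r − 1 − δ)(q̃r)^j m` for all `j ≤ i`. -/
def IsGood {m g r : ℕ} (qt δ : ℝ) (ψ : Tvert m g r → Bool)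
    (i : ℕ) (Bs : ℕ → Finset (Tvert m g r)) : Prop :=
  IsAdmissible qt ψ i Bs ∧
    ∀ j ≤ i, (qt * r - 1 - δ) * (qt * r) ^ j * m ≤ (Jzero ψ (Bs j)).card

/-- `ψ` is robust: every `ψ`-admissible family is `ψ`-good. -/
def Robust {m g r : ℕ} (qt δ : ℝ) (ψ : Tvert m g r → Bool) : Prop :=
  ∀ (i : ℕ) (Bs : ℕ → Finset (Tvert m g r)), IsAdmissible qt ψ i Bs → IsGood qt δ ψ i Bs

end Tvert
namespace Lem22
open Tvert

variable {m g r : ℕ}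

lemma len_trunc (σ : Tvert m g r) (l : ℕ) : len (trunc σ l) = min l (len σ) := rfl

lemma len_eq (σ : Tvert m g r) : (σ.2.1 : ℕ) = len σ := rfl

lemma trunc_fst (σ : Tvert m g r) (l : ℕ) : (trunc σ l).1 = σ.1 := rfl

lemma trunc_path (σ : Tvert m g r) (l k : ℕ) (hk : k < len (trunc σ l)) (hk' : k < len σ) :
    (trunc σ l).2.2 ⟨k, hk⟩ = σ.2.2 ⟨k, hk'⟩ := rfl

lemma tvert_ext {σ σ' : Tvert m g r} (h1 : σ.1 = σ'.1) (h2 : len σ = len σ')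
    (h3 : ∀ k (hk : k < len σ) (hk' : k < len σ'), σ.2.2 ⟨k, hk⟩ = σ'.2.2 ⟨k, hk'⟩) :
    σ = σ' := by
  obtain ⟨a, i, p⟩ := σ; obtain ⟨a', i', p'⟩ := σ'
  simp only [len] at h2 h3
  subst h1
  obtain rfl : i = i' := Fin.ext h2
  have : p = p' := by
    funext k
    have := h3 k.val k.2 k.2
    simpa using this
  rw [this]

lemma path_congr {σ σ' : Tvert m g r} (h : σ = σ') (k : ℕ) (hk : k < len σ) (hk' : k < len σ') :
    σ.2.2 ⟨k, hk⟩ = σ'.2.2 ⟨k, hk'⟩ := by subst h; rfl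

lemma trunc_trunc (σ : Tvert m g r) {l l' : ℕ} (h : l ≤ l') :
    trunc (trunc σ l') l = trunc σ l := by
  refine tvert_ext rfl ?_ ?_
  · simp only [len_trunc]; omega
  · intro k hk hk'; rfl

lemma key_length (σ : Tvert m g r) : (key σ).length = len σ + 1 := by
  simp [key, len]

lemma key_root (σ : Tvert m g r) (h : len σ = 0) : key σ = [(σ.1 : ℕ)] := by
  unfold key
  have h0 : List.ofFn σ.2.2 = [] := by
    apply List.eq_nil_of_length_eq_zero; simpa [len] using h
  simp [h0]

def lastc (σ : Tvert m g r) (h : 0 < len σ) : Fin r := σ.2.2 ⟨len σ - 1, by have := len_eq σ; omega⟩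

def parent (σ : Tvert m g r) : Tvert m g r := trunc σ (len σ - 1)

lemma len_parent (σ : Tvert m g r) : len (parent σ) = len σ - 1 := by
  have h := len_trunc σ (len σ - 1)
  rw [parent, h]; omega

lemma parent_fst (σ : Tvert m g r) : (parent σ).1 = σ.1 := rfl

lemma ofFn_eq_append (σ : Tvert m g r) (h : 0 < len σ) :
    List.ofFn σ.2.2 = List.ofFn (parent σ).2.2 ++ [lastc σ h] := by
  have hlp : len (parent σ) = len σ - 1 := len_parent σ
  have hL1 : (List.ofFn (parent σ).2.2).length = len σ - 1 := by
    rw [List.length_ofFn, len_eq, hlp]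
  apply List.ext_getElem
  · simp only [List.length_append, List.length_ofFn, List.length_singleton]
    rw [len_eq, len_eq, hlp]
    omega
  · intro i h1 h2
    rw [List.length_ofFn, len_eq] at h1
    have h1' : i < len σ := h1
    rcases lt_or_ge i (len σ - 1) with hi | hi
    · rw [List.getElem_append_left (by rw [hL1]; exact hi)]
      simp only [List.getElem_ofFn]
      have hk : i < len (parent σ) := by rw [len_parent]; omega
      exact (trunc_path σ (len σ - 1) i hk h1').symm
    · have hieq : i = len σ - 1 := by omega
      subst hieq
      rw [List.getElem_append_right (by rw [hL1])]
      simp only [List.getElem_ofFn, List.getElem_singleton]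
      rfl
lemma key_parent (σ : Tvert m g r) (h : 0 < len σ) :
    key σ = key (parent σ) ++ [((lastc σ h : ℕ))] := by
  unfold key
  rw [ofFn_eq_append σ h, parent_fst, List.map_append]
  simp

-- order lemmas
lemma prec_irrefl (σ : Tvert m g r) : ¬ prec σ σ := by
  rintro (h | ⟨-, h⟩)
  · omega
  · exact (List.Lex.asymm (·<·)).asymm _ _ h h

lemma lex_trans {l1 l2 l3 : List ℕ} (h1 : List.Lex (·<·) l1 l2) (h2 : List.Lex (·<·) l2 l3) :
    List.Lex (·<·) l1 l3 :=
  List.lt_trans h1 h2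

lemma prec_trans {σ1 σ2 σ3 : Tvert m g r} (h1 : prec σ1 σ2) (h2 : prec σ2 σ3) : prec σ1 σ3 := by
  rcases h1 with h1 | ⟨e1, h1⟩ <;> rcases h2 with h2 | ⟨e2, h2⟩
  · exact Or.inl (by omega)
  · exact Or.inl (by omega)
  · exact Or.inl (by omega)
  · exact Or.inr ⟨by omega, lex_trans h1 h2⟩

lemma prec_asymm {σ1 σ2 : Tvert m g r} (h1 : prec σ1 σ2) (h2 : prec σ2 σ1) : False :=
  prec_irrefl σ1 (prec_trans h1 h2)

lemma key_inj {σ σ' : Tvert m g r} (hl : len σ = len σ') (hk : key σ = key σ') : σ = σ' := by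
  unfold key at hk
  obtain ⟨h1, h2⟩ := List.cons.inj hk
  refine tvert_ext (Fin.ext h1) hl ?_
  intro k hkk hkk'
  have := List.map_injective_iff.2 (Fin.val_injective) h2
  have hg : (List.ofFn σ.2.2)[k]'(by rw [List.length_ofFn]; exact hkk) =
      (List.ofFn σ'.2.2)[k]'(by rw [List.length_ofFn]; exact hkk') := by
    simp only [this]
  simpa using hg

lemma prec_trichot {σ σ' : Tvert m g r} (hne : σ ≠ σ') : prec σ σ' ∨ prec σ' σ := by
  rcases lt_trichotomy (len σ) (len σ') with h | h | h
  · exact Or.inl (Or.inl h)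
  · rcases trichotomous_of (List.Lex (·<·)) (key σ) (key σ') with hk | hk | hk
    · exact Or.inl (Or.inr ⟨h, hk⟩)
    · exact absurd (key_inj h hk) hne
    · exact Or.inr (Or.inr ⟨h.symm, hk⟩)
  · exact Or.inr (Or.inl h)

lemma trunc_prec (σ : Tvert m g r) {l : ℕ} (hl : l < len σ) : prec (trunc σ l) σ := by
  left; rw [len_trunc]; omega

lemma parent_prec (σ : Tvert m g r) (h : 0 < len σ) : prec (parent σ) σ :=
  trunc_prec σ (by omega)

lemma lex_append_same {l1 l2 : List ℕ} (a : ℕ) (hlen : l1.length = l2.length)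
    (h : List.Lex (·<·) l1 l2) : List.Lex (·<·) (l1 ++ [a]) (l2 ++ [a]) := by
  induction h with
  | nil => simp at hlen
  | @cons x t1 t2 ht ih =>
      exact List.Lex.cons (ih (by simpa using hlen))
  | @rel x t1 y t2 hxy => exact List.Lex.rel hxy

lemma lex_append_same_rev {l1 l2 : List ℕ} (a b : ℕ) (hlen : l1.length = l2.length)
    (h : List.Lex (·<·) (l1 ++ [a]) (l2 ++ [b])) :
    List.Lex (·<·) l1 l2 ∨ l1 = l2 := by
  induction l1 generalizing l2 with
  | nil =>
      cases l2 with
      | nil => exact Or.inr rfl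
      | cons c t => simp at hlen
  | cons x t1 ih =>
      cases l2 with
      | nil => simp at hlen
      | cons z t2 =>
          simp only [List.cons_append] at h
          cases h with
          | cons h' =>
              rcases ih (by simpa using hlen) h' with h'' | h''
              · exact Or.inl (List.Lex.cons h'')
              · exact Or.inr (by rw [h''])
          | rel hxy => exact Or.inl (List.Lex.rel hxy)

lemma prec_of_parent_prec {σ σ' : Tvert m g r} (h : 0 < len σ) (h' : 0 < len σ')
    (hlast : (lastc σ h : ℕ) = (lastc σ' h' : ℕ))
    (hp : prec (parent σ) (parent σ')) : prec σ σ' := by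
  have e1 := len_parent σ
  have e2 := len_parent σ'
  rcases hp with hp | ⟨hpe, hp⟩
  · left; omega
  · right
    refine ⟨by omega, ?_⟩
    rw [key_parent σ h, key_parent σ' h', hlast]
    exact lex_append_same _ (by rw [key_length, key_length, hpe]) hp

lemma eq_of_parent_eq {σ σ' : Tvert m g r} (h : 0 < len σ) (h' : 0 < len σ')
    (hlen : len σ = len σ') (hlast : lastc σ h = lastc σ' h')
    (hp : parent σ = parent σ') : σ = σ' := by
  refine tvert_ext ?_ hlen ?_
  · rw [← parent_fst σ, ← parent_fst σ', hp]
  · intro k hk hk'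
    rcases lt_or_ge k (len σ - 1) with hlt | hge
    · have a1 : σ.2.2 ⟨k, hk⟩ =
          (parent σ).2.2 ⟨k, by have := len_eq (parent σ); have := len_parent σ; omega⟩ :=
        (trunc_path σ (len σ - 1) k
          (by have := len_parent σ; rw [parent] at this; omega) hk).symm
      have a2 : σ'.2.2 ⟨k, hk'⟩ =
          (parent σ').2.2 ⟨k, by have := len_eq (parent σ'); have := len_parent σ'; omega⟩ :=
        (trunc_path σ' (len σ' - 1) k
          (by have := len_parent σ'; rw [parent] at this; omega) hk').symm
      rw [a1, a2]
      exact path_congr hp _ _ _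
    · have hkeq : k = len σ - 1 := by omega
      subst hkeq
      have hfin : (⟨len σ - 1, hk'⟩ : Fin ((σ'.2.1 : ℕ))) =
          ⟨len σ' - 1, by have := len_eq σ'; omega⟩ := Fin.ext (by simp only []; omega)
      calc σ.2.2 ⟨len σ - 1, hk⟩ = lastc σ h := rfl
        _ = lastc σ' h' := hlast
        _ = σ'.2.2 ⟨len σ - 1, hk'⟩ := by rw [hfin]; rfl
section Z
variable {n : ℕ} (y : Fin n → Fin r → Fin n) (A : Finset (Fin n)) (hA : A.card = m)

lemma zvert_root (σ : Tvert m g r) (h : len σ = 0) :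
    zvert y A hA σ = A.orderIsoOfFin hA σ.1 := by
  unfold zvert
  have h0 : List.ofFn σ.2.2 = [] := by
    apply List.eq_nil_of_length_eq_zero; rw [List.length_ofFn]; exact h
  rw [h0, List.foldl_nil]

lemma zvert_parent (σ : Tvert m g r) (h : 0 < len σ) :
    zvert y A hA σ = y (zvert y A hA (parent σ)) (lastc σ h) := by
  unfold zvert
  rw [ofFn_eq_append σ h, List.foldl_append, parent_fst]
  simp

lemma psi_true_iff (σ : Tvert m g r) :
    psi y A hA σ = true ↔
      (len σ ≠ 0 ∧ zvert y A hA σ ∈ Aseen y A hA σ ∧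
        ∀ l < len σ, psi y A hA (trunc σ l) = false) := by
  rw [psi]
  split_ifs with h0
  · simp [h0]
  · simp only [Bool.and_eq_true, decide_eq_true_eq, Bool.not_eq_true']
    constructor
    · rintro ⟨hmem, hany⟩
      refine ⟨h0, hmem, fun l hl => ?_⟩
      rw [List.any_eq_false] at hany
      have := hany l (List.mem_range.2 hl)
      simp only [Bool.not_eq_true] at this
      rwa [dif_pos hl] at this
    · rintro ⟨-, hmem, hpre⟩
      refine ⟨hmem, ?_⟩
      rw [List.any_eq_false]
      intro l hl
      simp only [Bool.not_eq_true]
      rw [dif_pos (List.mem_range.1 hl)]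
      exact hpre l (List.mem_range.1 hl)

lemma psi_false_root (σ : Tvert m g r) (h : len σ = 0) : psi y A hA σ = false := by
  rw [psi]; simp [h]

lemma psi_len_pos {σ : Tvert m g r} (h : psi y A hA σ = true) : 0 < len σ := by
  have := ((psi_true_iff y A hA σ).1 h).1; omega

lemma psi_trunc_false {σ : Tvert m g r} (h : psi y A hA σ = true) {l : ℕ} (hl : l < len σ) :
    psi y A hA (trunc σ l) = false := ((psi_true_iff y A hA σ).1 h).2.2 l hl

lemma mem_Aseen {τ σ : Tvert m g r} (hp : prec τ σ)
    (he : zvert y A hA τ = zvert y A hA σ) :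
    zvert y A hA σ ∈ Aseen y A hA σ := by
  simp only [Aseen, Finset.mem_image, Finset.mem_filter, Finset.mem_univ, true_and]
  exact ⟨τ, hp, he⟩

lemma exists_collision {σ : Tvert m g r} (h : psi y A hA σ = true) :
    ∃ τ, prec τ σ ∧ zvert y A hA τ = zvert y A hA σ := by
  have hm := ((psi_true_iff y A hA σ).1 h).2.1
  simp only [Aseen, Finset.mem_image, Finset.mem_filter, Finset.mem_univ, true_and] at hm
  obtain ⟨τ, h1, h2⟩ := hm
  exact ⟨τ, h1, h2⟩

lemma fresh_parent {σ : Tvert m g r} (h : psi y A hA σ = true) (hp : 0 < len σ) :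
    ∀ τ, prec τ (parent σ) → zvert y A hA τ ≠ zvert y A hA (parent σ) := by
  intro τ hτ heq
  have hlp := len_parent σ
  rcases Nat.eq_zero_or_pos (len (parent σ)) with h0 | h0
  · rcases hτ with hlt | ⟨hlen, hlex⟩
    · omega
    · rw [zvert_root y A hA τ (by omega), zvert_root y A hA (parent σ) h0, parent_fst] at heq
      rw [key_root τ (by omega), key_root (parent σ) h0, parent_fst] at hlex
      rw [List.lex_singleton_iff] at hlex
      have h11 : τ.1 = σ.1 :=
        (A.orderIsoOfFin hA).injective (Subtype.coe_injective heq)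
      have := congrArg Fin.val h11
      omega
  · have hmem : zvert y A hA (parent σ) ∈ Aseen y A hA (parent σ) :=
      mem_Aseen y A hA hτ heq
    have hpre := ((psi_true_iff y A hA σ).1 h).2.2
    have hparfalse : psi y A hA (parent σ) = false := hpre (len σ - 1) (by omega)
    have hnot : ¬ psi y A hA (parent σ) = true := by simp [hparfalse]
    rw [psi_true_iff] at hnot
    push_neg at hnot
    obtain ⟨l, hl, hlt⟩ := hnot (by omega) hmem
    have htr : psi y A hA (trunc σ l) = true := by
      have e : trunc (trunc σ (len σ - 1)) l = trunc σ l := trunc_trunc σ (by omega)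
      rw [← e]
      exact (by simpa [Bool.not_eq_false] using hlt : psi y A hA (trunc (parent σ) l) = true)
    have := hpre l (by omega)
    rw [htr] at this
    exact Bool.true_eq_false ▸ this

lemma no_prequery {σstar σ'' : Tvert m g r} (h : psi y A hA σstar = true)
    (hp : 0 < len σstar) (hp'' : 0 < len σ'')
    (hprec : prec σ'' σstar)
    (hv : zvert y A hA (parent σ'') = zvert y A hA (parent σstar))
    (hc : (lastc σ'' hp'' : ℕ) = (lastc σstar hp : ℕ)) : False := by
  by_cases heq : parent σ'' = parent σstar
  · have hlen : len σ'' = len σstar := by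
      have := congrArg len heq
      rw [len_parent, len_parent] at this
      omega
    have : σ'' = σstar :=
      eq_of_parent_eq hp'' hp hlen (Fin.val_injective hc) heq
    exact prec_irrefl σstar (this ▸ hprec)
  · rcases prec_trichot heq with hpp | hpp
    · exact fresh_parent y A hA h hp _ hpp hv
    · exact prec_asymm hprec (prec_of_parent_prec hp hp'' hc.symm hpp)

lemma zvert_invariant {y' : Fin n → Fin r → Fin n} {v : Fin n} {c0 : Fin r}
    (hagree : ∀ x i, ¬(x = v ∧ i = c0) → y' x i = y x i)
    (σstar : Tvert m g r)
    (hfresh : ∀ σ'' (h'' : 0 < len σ''), prec σ'' σstar →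
      ¬(zvert y A hA (parent σ'') = v ∧ lastc σ'' h'' = c0)) :
    ∀ τ, prec τ σstar → zvert y' A hA τ = zvert y A hA τ := by
  suffices H : ∀ L τ, len τ = L → prec τ σstar → zvert y' A hA τ = zvert y A hA τ by
    exact fun τ h => H (len τ) τ rfl h
  intro L
  induction L using Nat.strong_induction_on with
  | _ L ih =>
  intro τ hL hτ
  rcases Nat.eq_zero_or_pos (len τ) with h0 | h0
  · rw [zvert_root y' A hA τ h0, zvert_root y A hA τ h0]
  · rw [zvert_parent y' A hA τ h0, zvert_parent y A hA τ h0]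
    have hparent : prec (parent τ) σstar := prec_trans (parent_prec τ h0) hτ
    have hz : zvert y' A hA (parent τ) = zvert y A hA (parent τ) :=
      ih (len (parent τ)) (by rw [len_parent]; omega) (parent τ) rfl hparent
    rw [hz]
    apply hagree
    intro ⟨hx, hi⟩
    exact hfresh τ h0 hτ ⟨hx, hi⟩

lemma psi_congr {y' : Fin n → Fin r → Fin n} (σ0 : Tvert m g r)
    (hz : ∀ τ, (prec τ σ0 ∨ τ = σ0) → zvert y' A hA τ = zvert y A hA τ) :
    psi y' A hA σ0 = psi y A hA σ0 := by
  suffices H : ∀ L σ0, len σ0 = L →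
      (∀ τ, (prec τ σ0 ∨ τ = σ0) → zvert y' A hA τ = zvert y A hA τ) →
      psi y' A hA σ0 = psi y A hA σ0 by
    exact H (len σ0) σ0 rfl hz
  clear hz σ0
  intro L
  induction L using Nat.strong_induction_on with
  | _ L ih =>
  intro σ0 hL hz
  rcases Nat.eq_zero_or_pos (len σ0) with h0 | h0
  · rw [psi_false_root y' A hA σ0 h0, psi_false_root y A hA σ0 h0]
  · have e1 : zvert y' A hA σ0 = zvert y A hA σ0 := hz σ0 (Or.inr rfl)
    have e2 : Aseen y' A hA σ0 = Aseen y A hA σ0 := by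
      unfold Aseen
      apply Finset.image_congr
      intro τ hτ
      simp only [Finset.coe_filter, Set.mem_setOf_eq] at hτ
      exact hz τ (Or.inl hτ.2)
    have etr : ∀ l < len σ0, psi y' A hA (trunc σ0 l) = psi y A hA (trunc σ0 l) := by
      intro l hl
      refine ih l (by omega) (trunc σ0 l) (by rw [len_trunc]; omega) ?_
      intro τ hτ
      rcases hτ with hτ | rfl
      · exact hz τ (Or.inl (prec_trans hτ (trunc_prec σ0 hl)))
      · exact hz _ (Or.inl (trunc_prec σ0 hl))
    have hiff : psi y' A hA σ0 = true ↔ psi y A hA σ0 = true := by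
      rw [psi_true_iff, psi_true_iff, e1, e2]
      refine and_congr_right fun _ => and_congr_right fun _ => ?_
      exact forall_congr' fun l => imp_congr_right fun hl => by rw [etr l hl]
    cases hb : psi y A hA σ0 with
    | false => simpa [hb] using (fun hh => by simpa [hh, hb] using hiff.1 hh : ¬ psi y' A hA σ0 = true)
    | true => exact hiff.2 hb

end Z
open scoped Classical

section Count
variable {n : ℕ}

noncomputable instance : Fintype {y : Fin n → Fin r → Fin n // IsGraph y} :=
  Fintype.ofFinite _

noncomputable def Ev (A : Finset (Fin n)) (hA : A.card = m) {k : ℕ}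
    (σs : Fin k → Tvert m g r) : Finset {y : Fin n → Fin r → Fin n // IsGraph y} :=
  Finset.univ.filter fun y => ∀ j, psi (g := g) y.1 A hA (σs j) = true

noncomputable def allowedSet (y : Fin n → Fin r → Fin n) (v : Fin n) (c0 : Fin r) :
    Finset (Fin n) :=
  Finset.univ \ insert v ((Finset.univ.erase c0).image (y v))

lemma card_allowedSet {y : Fin n → Fin r → Fin n} (hG : IsGraph y) (v : Fin n) (c0 : Fin r)
    (hrn : r < n) : (allowedSet y v c0).card = n - r := by
  have hr0 : 0 < r := c0.pos
  have h1 : ((Finset.univ.erase c0).image (y v)).card = r - 1 := by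
    rw [Finset.card_image_of_injective _ (hG v).1, Finset.card_erase_of_mem (Finset.mem_univ _),
      Finset.card_univ, Fintype.card_fin]
  have h2 : v ∉ (Finset.univ.erase c0).image (y v) := by
    simp only [Finset.mem_image]
    rintro ⟨i, -, hi⟩
    exact (hG v).2 i hi
  have h3 : (insert v ((Finset.univ.erase c0).image (y v))).card = r := by
    rw [Finset.card_insert_of_notMem h2, h1]; omega
  rw [allowedSet, Finset.card_sdiff_of_subset (Finset.subset_univ _), Finset.card_univ, Fintype.card_fin, h3]

noncomputable def modify (y : Fin n → Fin r → Fin n) (v : Fin n) (c0 : Fin r) (w : Fin n) :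
    Fin n → Fin r → Fin n := Function.update y v (Function.update (y v) c0 w)

lemma modify_apply_ne (y : Fin n → Fin r → Fin n) (v : Fin n) (c0 : Fin r) (w : Fin n)
    (x : Fin n) (i : Fin r) (h : ¬(x = v ∧ i = c0)) : modify y v c0 w x i = y x i := by
  unfold modify
  by_cases hx : x = v
  · subst hx
    have hi : i ≠ c0 := fun hi => h ⟨rfl, hi⟩
    rw [Function.update_self, Function.update_of_ne hi]
  · rw [Function.update_of_ne hx]

lemma modify_apply_slot (y : Fin n → Fin r → Fin n) (v : Fin n) (c0 : Fin r) (w : Fin n) :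
    modify y v c0 w v c0 = w := by
  unfold modify
  rw [Function.update_self, Function.update_self]

lemma isGraph_modify {y : Fin n → Fin r → Fin n} (hG : IsGraph y) {v : Fin n} {c0 : Fin r}
    {w : Fin n} (hw : w ∈ allowedSet y v c0) : IsGraph (modify y v c0 w) := by
  have hw' := hw
  simp only [allowedSet, Finset.mem_sdiff, Finset.mem_univ, true_and, Finset.mem_insert,
    Finset.mem_image, not_or, not_exists] at hw'
  obtain ⟨hwv, hwim⟩ := hw'
  intro x
  constructor
  · intro a b hab
    by_cases hx : x = v
    · subst hx
      by_cases ha : a = c0 <;> by_cases hb : b = c0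
      · rw [ha, hb]
      · rw [ha, modify_apply_slot, modify_apply_ne y x c0 w x b (by tauto)] at hab
        exact absurd hab.symm (fun hh => hwim b ⟨by simp [hb], hh⟩)
      · rw [hb, modify_apply_slot, modify_apply_ne y x c0 w x a (by tauto)] at hab
        exact absurd hab (fun hh => hwim a ⟨by simp [ha], hh⟩)
      · rw [modify_apply_ne y x c0 w x a (by tauto),
          modify_apply_ne y x c0 w x b (by tauto)] at hab
        exact (hG x).1 hab
    · rw [modify_apply_ne y v c0 w x a (by tauto),
        modify_apply_ne y v c0 w x b (by tauto)] at hab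
      exact (hG x).1 hab
  · intro i
    by_cases hx : x = v
    · subst hx
      by_cases hi : i = c0
      · rw [hi, modify_apply_slot]; exact fun hh => hwv hh
      · rw [modify_apply_ne y x c0 w x i (by tauto)]
        exact (hG x).2 i
    · rw [modify_apply_ne y v c0 w x i (by tauto)]
      exact (hG x).2 i

lemma exists_prec_max {s : Finset (Tvert m g r)} (hs : s.Nonempty) :
    ∃ σm ∈ s, ∀ σ ∈ s, σ ≠ σm → prec σ σm := by
  induction s using Finset.induction_on with
  | empty => simp at hs
  | @insert a s ha ih =>
    rcases s.eq_empty_or_nonempty with rfl | hs'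
    · exact ⟨a, by simp, by simp⟩
    · obtain ⟨σm, hσm, hmax⟩ := ih hs'
      have hane : a ≠ σm := fun h => ha (h ▸ hσm)
      rcases prec_trichot hane with hpa | hpa
      · refine ⟨σm, by simp [hσm], ?_⟩
        intro σ hσ hne
        rcases Finset.mem_insert.1 hσ with rfl | hσ
        · exact hpa
        · exact hmax σ hσ hne
      · refine ⟨a, by simp, ?_⟩
        intro σ hσ hne
        rcases Finset.mem_insert.1 hσ with rfl | hσ
        · exact absurd rfl hne
        · by_cases hσσ : σ = σm
          · exact hσσ ▸ hpa
          · exact prec_trans (hmax σ hσ hσσ) hpa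

end Count
section Step
variable {n : ℕ}

lemma zvert_modify (A : Finset (Fin n)) (hA : A.card = m) {σstar : Tvert m g r}
    (hp : 0 < len σstar) {y : Fin n → Fin r → Fin n}
    (hpsi : psi y A hA σstar = true) (w : Fin n) (τ : Tvert m g r) (hτ : prec τ σstar) :
    zvert (modify y (zvert y A hA (parent σstar)) (lastc σstar hp) w) A hA τ
      = zvert y A hA τ := by
  refine zvert_invariant y A hA (v := zvert y A hA (parent σstar)) (c0 := lastc σstar hp) ?_ σstar ?_ τ hτ
  · intro x i hxi; exact modify_apply_ne _ _ _ _ _ _ hxi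
  · rintro σ'' h'' hprec ⟨h1, h2⟩
    exact no_prequery y A hA hpsi hp h'' hprec h1 (congrArg Fin.val h2)

lemma psi_modify (A : Finset (Fin n)) (hA : A.card = m) {σstar : Tvert m g r}
    (hp : 0 < len σstar) {y : Fin n → Fin r → Fin n}
    (hpsi : psi y A hA σstar = true) (w : Fin n) {σ0 : Tvert m g r} (hσ0 : prec σ0 σstar) :
    psi (modify y (zvert y A hA (parent σstar)) (lastc σstar hp) w) A hA σ0
      = psi y A hA σ0 := by
  apply psi_congr
  intro τ hτ
  apply zvert_modify A hA hp hpsi w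
  rcases hτ with hτ | rfl
  · exact prec_trans hτ hσ0
  · exact hσ0

noncomputable def wval (A : Finset (Fin n)) (hA : A.card = m) {σstar : Tvert m g r}
    (hp : 0 < len σstar) (hrn : r < n)
    (y : {y : Fin n → Fin r → Fin n // IsGraph y}) (c : Fin (n - r)) : Fin n :=
  ((allowedSet y.1 (zvert y.1 A hA (parent σstar)) (lastc σstar hp)).orderIsoOfFin
    (card_allowedSet y.2 _ _ hrn) c : Fin n)

lemma wval_mem (A : Finset (Fin n)) (hA : A.card = m) {σstar : Tvert m g r}
    (hp : 0 < len σstar) (hrn : r < n)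
    (y : {y : Fin n → Fin r → Fin n // IsGraph y}) (c : Fin (n - r)) :
    wval A hA hp hrn y c ∈
      allowedSet y.1 (zvert y.1 A hA (parent σstar)) (lastc σstar hp) :=
  Finset.coe_mem _

lemma wval_inj (A : Finset (Fin n)) (hA : A.card = m) {σstar : Tvert m g r}
    (hp : 0 < len σstar) (hrn : r < n)
    (y : {y : Fin n → Fin r → Fin n // IsGraph y}) {c1 c2 : Fin (n - r)}
    (h : wval A hA hp hrn y c1 = wval (σstar := σstar) A hA hp hrn y c2) : c1 = c2 :=
  (Finset.orderIsoOfFin _ _).injective (Subtype.ext h)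

noncomputable def tauOf (A : Finset (Fin n)) (hA : A.card = m) (σstar : Tvert m g r)
    (y : {y : Fin n → Fin r → Fin n // IsGraph y}) : Tvert m g r :=
  if h : ∃ τ, prec τ σstar ∧ zvert y.1 A hA τ = zvert y.1 A hA σstar then h.choose else σstar

lemma tauOf_spec (A : Finset (Fin n)) (hA : A.card = m) {σstar : Tvert m g r}
    {y : {y : Fin n → Fin r → Fin n // IsGraph y}} (hpsi : psi y.1 A hA σstar = true) :
    prec (tauOf A hA σstar y) σstar ∧
      zvert y.1 A hA (tauOf A hA σstar y) = zvert y.1 A hA σstar := by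
  have hex : ∃ τ, prec τ σstar ∧ zvert y.1 A hA τ = zvert y.1 A hA σstar :=
    exists_collision y.1 A hA hpsi
  rw [tauOf, dif_pos hex]
  exact hex.choose_spec

lemma step_card (A : Finset (Fin n)) (hA : A.card = m) (hrn : r < n) {k : ℕ}
    (σs : Fin (k + 1) → Tvert m g r) (hinj : Function.Injective σs) (jstar : Fin (k + 1))
    (hmax : ∀ j, j ≠ jstar → prec (σs j) (σs jstar)) :
    (Ev A hA σs).card * (n - r) ≤
      (Ev A hA (fun i => σs (jstar.succAbove i))).card * Fintype.card (Tvert m g r) := by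
  by_cases hl0 : len (σs jstar) = 0
  · have hE : Ev A hA σs = ∅ := by
      rw [Finset.eq_empty_iff_forall_notMem]
      intro y hy
      rw [Ev, Finset.mem_filter] at hy
      have := psi_len_pos y.1 A hA (hy.2 jstar)
      omega
    simp [hE]
  have hp : 0 < len (σs jstar) := by omega
  have key : ((Ev A hA σs) ×ˢ (Finset.univ : Finset (Fin (n - r)))).card ≤
      ((Ev A hA (fun i => σs (jstar.succAbove i))) ×ˢ
        (Finset.univ : Finset (Tvert m g r))).card := by
    apply Finset.card_le_card_of_injOn (f := fun p =>
      (⟨modify p.1.1 (zvert p.1.1 A hA (parent (σs jstar))) (lastc (σs jstar) hp)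
          (wval A hA hp hrn p.1 p.2),
        isGraph_modify p.1.2 (wval_mem A hA hp hrn p.1 p.2)⟩,
       tauOf A hA (σs jstar) p.1))
    · rintro ⟨y, c⟩ hyc
      simp only [Finset.mem_coe, Finset.mem_product, Finset.mem_univ, and_true] at hyc ⊢
      simp only [Ev, Finset.mem_filter] at hyc ⊢
      refine ⟨Finset.mem_univ _, ?_⟩
      intro i
      have hpsi : ∀ j, psi y.1 A hA (σs j) = true := hyc.2
      show psi (modify y.1 _ _ _) A hA (σs (jstar.succAbove i)) = true
      rw [psi_modify A hA hp (hpsi jstar) _ (hmax _ (Fin.succAbove_ne jstar i))]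
      exact hpsi _
    · rintro ⟨y1, c1⟩ h1 ⟨y2, c2⟩ h2 heq
      simp only [Finset.mem_coe, Finset.mem_product, Finset.mem_univ, and_true] at h1 h2
      rw [Ev, Finset.mem_filter] at h1 h2
      have hpsi1 : psi y1.1 A hA (σs jstar) = true := h1.2 jstar
      have hpsi2 : psi y2.1 A hA (σs jstar) = true := h2.2 jstar
      simp only [Prod.mk.injEq, Subtype.mk.injEq] at heq
      obtain ⟨e1, e2⟩ := heq
      obtain ⟨hτp1, hτz1⟩ := tauOf_spec A hA (y := y1) hpsi1
      obtain ⟨hτp2, hτz2⟩ := tauOf_spec A hA (y := y2) hpsi2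
      rw [← e2] at hτz2
      have hzz : ∀ τ', prec τ' (σs jstar) →
          zvert y1.1 A hA τ' = zvert y2.1 A hA τ' := by
        intro τ' h
        rw [← zvert_modify A hA hp hpsi1 (wval A hA hp hrn y1 c1) τ' h, e1,
          zvert_modify A hA hp hpsi2 (wval A hA hp hrn y2 c2) τ' h]
      have hv12 : zvert y1.1 A hA (parent (σs jstar)) =
          zvert y2.1 A hA (parent (σs jstar)) := hzz _ (parent_prec _ hp)
      have hyy : y1.1 = y2.1 := by
        funext x i
        by_cases hxi : x = zvert y1.1 A hA (parent (σs jstar)) ∧ i = lastc (σs jstar) hp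
        · obtain ⟨hx, hi⟩ := hxi
          subst hx; subst hi
          calc y1.1 (zvert y1.1 A hA (parent (σs jstar))) (lastc (σs jstar) hp)
              = zvert y1.1 A hA (σs jstar) := (zvert_parent y1.1 A hA (σs jstar) hp).symm
            _ = zvert y1.1 A hA (tauOf A hA (σs jstar) y1) := hτz1.symm
            _ = zvert y2.1 A hA (tauOf A hA (σs jstar) y1) := hzz _ hτp1
            _ = zvert y2.1 A hA (σs jstar) := hτz2
            _ = y2.1 (zvert y2.1 A hA (parent (σs jstar))) (lastc (σs jstar) hp) :=
                zvert_parent y2.1 A hA (σs jstar) hp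
            _ = y2.1 (zvert y1.1 A hA (parent (σs jstar))) (lastc (σs jstar) hp) := by
                rw [hv12]
        · have hxi2 : ¬(x = zvert y2.1 A hA (parent (σs jstar)) ∧ i = lastc (σs jstar) hp) := by
            rw [← hv12]; exact hxi
          calc y1.1 x i
              = modify y1.1 (zvert y1.1 A hA (parent (σs jstar))) (lastc (σs jstar) hp)
                  (wval A hA hp hrn y1 c1) x i := (modify_apply_ne _ _ _ _ _ _ hxi).symm
            _ = modify y2.1 (zvert y2.1 A hA (parent (σs jstar))) (lastc (σs jstar) hp)
                  (wval A hA hp hrn y2 c2) x i := by rw [e1]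
            _ = y2.1 x i := modify_apply_ne _ _ _ _ _ _ hxi2
      have hyy' : y1 = y2 := Subtype.ext hyy
      subst hyy'
      have hw : wval (σstar := σs jstar) A hA hp hrn y1 c1 = wval A hA hp hrn y1 c2 := by
        have h3 := congrFun (congrFun e1 (zvert y1.1 A hA (parent (σs jstar))))
          (lastc (σs jstar) hp)
        rwa [modify_apply_slot, modify_apply_slot] at h3
      have : c1 = c2 := wval_inj A hA hp hrn y1 hw
      rw [this]
  rw [Finset.card_product, Finset.card_product, Finset.card_univ, Finset.card_univ,
    Fintype.card_fin] at key
  exact key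

end Step
section Main
variable {n : ℕ}

lemma Ev_zero (A : Finset (Fin n)) (hA : A.card = m) (σs : Fin 0 → Tvert m g r) :
    Ev A hA σs = Finset.univ := by
  rw [Ev]; apply Finset.filter_true_of_mem; intro y _; intro j; exact j.elim0

lemma main_card (A : Finset (Fin n)) (hA : A.card = m) (hrn : r < n) :
    ∀ (k : ℕ) (σs : Fin k → Tvert m g r), Function.Injective σs →
      (Ev A hA σs).card * (n - r) ^ k ≤
        Fintype.card {y : Fin n → Fin r → Fin n // IsGraph y} *
          Fintype.card (Tvert m g r) ^ k := by
  intro k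
  induction k with
  | zero =>
      intro σs _
      rw [Ev_zero A hA σs]
      simp [Finset.card_univ]
  | succ k ih =>
      intro σs hinj
      obtain ⟨σm, hσm, hmaxm⟩ := exists_prec_max (s := Finset.univ.image σs)
        (Finset.image_nonempty.2 Finset.univ_nonempty)
      obtain ⟨jstar, -, hjs⟩ := Finset.mem_image.1 hσm
      have hmax : ∀ j, j ≠ jstar → prec (σs j) (σs jstar) := by
        intro j hj
        rw [hjs]
        exact hmaxm _ (Finset.mem_image_of_mem σs (Finset.mem_univ j))
          (fun h => hj (hinj (h.trans hjs.symm)))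
      have h1 := step_card A hA hrn σs hinj jstar hmax
      have h2 := ih (fun i => σs (jstar.succAbove i))
        (hinj.comp Fin.succAbove_right_injective)
      calc (Ev A hA σs).card * (n - r) ^ (k + 1)
          = ((Ev A hA σs).card * (n - r)) * (n - r) ^ k := by ring
        _ ≤ ((Ev A hA (fun i => σs (jstar.succAbove i))).card *
              Fintype.card (Tvert m g r)) * (n - r) ^ k := Nat.mul_le_mul_right _ h1
        _ = Fintype.card (Tvert m g r) *
              ((Ev A hA (fun i => σs (jstar.succAbove i))).card * (n - r) ^ k) := by ring
        _ ≤ Fintype.card (Tvert m g r) *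
              (Fintype.card {y : Fin n → Fin r → Fin n // IsGraph y} *
                Fintype.card (Tvert m g r) ^ k) := Nat.mul_le_mul_left _ h2
        _ = Fintype.card {y : Fin n → Fin r → Fin n // IsGraph y} *
              Fintype.card (Tvert m g r) ^ (k + 1) := by ring

lemma card_Tvert : Fintype.card (Tvert m g r) = ∑ i ∈ Finset.range (g + 1), r ^ i * m := by
  rw [Fintype.card_prod, Fintype.card_fin, Fintype.card_sigma]
  simp only [Fintype.card_fun, Fintype.card_fin]
  rw [Fin.sum_univ_eq_sum_range (fun i => r ^ i), Finset.mul_sum]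
  exact Finset.sum_congr rfl fun i _ => mul_comm _ _

lemma exists_graph (hrn : r < n) :
    IsGraph (fun (x : Fin n) (i : Fin r) => x + ⟨i.1 + 1, by omega⟩) := by
  haveI : NeZero n := ⟨by omega⟩
  intro x
  constructor
  · intro a b hab
    have h2 : (⟨a.1 + 1, by omega⟩ : Fin n) = ⟨b.1 + 1, by omega⟩ := add_left_cancel hab
    have h3 := congrArg Fin.val h2
    simp only [] at h3
    exact Fin.ext (by omega)
  · intro i hi
    have h2 : (⟨i.1 + 1, by omega⟩ : Fin n) = 0 := add_eq_left.mp hi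
    have h3 := congrArg Fin.val h2
    simp only [Fin.val_zero] at h3
    omega

end Main
end Lem22
/-- **Lemma 2.2.** For `A ⊆ V_n` with `|A| = m` and distinct vertices
`σ^{i_1}, …, σ^{i_k} ∈ T_m`,
`P_n(ψ(A)(σ^{i_1}) = ⋯ = ψ(A)(σ^{i_k}) = 1) ≤ ((m + rm + ⋯ + r^g m)/(n-r))^k`. -/
theorem psi_ones_probability_bound
    (n r g m k : ℕ) (hr : 1 ≤ r) (hg : 1 ≤ g) (hn : r < n)
    (A : Finset (Fin n)) (hA : A.card = m)
    (σs : Fin k → Tvert m g r) (hinj : Function.Injective σs) :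
    graphMeasure n r {w | ∀ j : Fin k, psi w.1 A hA (σs j) = true} ≤
      (((∑ i ∈ Finset.range (g + 1), r ^ i * m : ℕ) : ℝ≥0∞) /
        ((n - r : ℕ) : ℝ≥0∞)) ^ k := by
  classical
  have hset : {w : {y : Fin n → Fin r → Fin n // IsGraph y} |
      ∀ j : Fin k, psi w.1 A hA (σs j) = true} = ↑(Lem22.Ev A hA σs) := by
    ext w
    simp [Lem22.Ev]
  rw [graphMeasure, MeasureTheory.Measure.smul_apply, hset,
    MeasureTheory.Measure.count_apply_finset, smul_eq_mul]
  have hcount := Lem22.main_card A hA hn k σs hinj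
  have hG0 : 0 < Fintype.card {y : Fin n → Fin r → Fin n // IsGraph y} :=
    Fintype.card_pos_iff.2 ⟨⟨_, Lem22.exists_graph hn⟩⟩
  have hNcard : Nat.card {y : Fin n → Fin r → Fin n // IsGraph y}
      = Fintype.card {y : Fin n → Fin r → Fin n // IsGraph y} := Nat.card_eq_fintype_card
  have hnr0 : ((n - r : ℕ) : ℝ≥0∞) ≠ 0 := by
    simp only [ne_eq, Nat.cast_eq_zero]
    omega
  rw [div_eq_mul_inv, mul_pow, ← ENNReal.inv_pow, ← div_eq_mul_inv, ENNReal.le_div_iff_mul_le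
    (Or.inl (pow_ne_zero k hnr0)) (Or.inl (ENNReal.pow_ne_top (ENNReal.natCast_ne_top _)))]
  have hmain : ((Lem22.Ev A hA σs).card : ℝ≥0∞) * ((n - r : ℕ) : ℝ≥0∞) ^ k ≤
      (Fintype.card {y : Fin n → Fin r → Fin n // IsGraph y} : ℝ≥0∞) *
        ((∑ i ∈ Finset.range (g + 1), r ^ i * m : ℕ) : ℝ≥0∞) ^ k := by
    rw [← Lem22.card_Tvert]
    exact_mod_cast hcount
  have hcg0 : ((Nat.card {y : Fin n → Fin r → Fin n // IsGraph y} : ℕ) : ℝ≥0∞) ≠ 0 := by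
    simp only [ne_eq, Nat.cast_eq_zero, hNcard]
    omega
  calc ((Nat.card {y : Fin n → Fin r → Fin n // IsGraph y} : ℕ) : ℝ≥0∞)⁻¹ *
        ((Lem22.Ev A hA σs).card : ℝ≥0∞) * ((n - r : ℕ) : ℝ≥0∞) ^ k
      = ((Nat.card {y : Fin n → Fin r → Fin n // IsGraph y} : ℕ) : ℝ≥0∞)⁻¹ *
        (((Lem22.Ev A hA σs).card : ℝ≥0∞) * ((n - r : ℕ) : ℝ≥0∞) ^ k) := by ring
    _ ≤ ((Nat.card {y : Fin n → Fin r → Fin n // IsGraph y} : ℕ) : ℝ≥0∞)⁻¹ *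
        ((Fintype.card {y : Fin n → Fin r → Fin n // IsGraph y} : ℝ≥0∞) *
          ((∑ i ∈ Finset.range (g + 1), r ^ i * m : ℕ) : ℝ≥0∞) ^ k) :=
        mul_le_mul_right hmain _
    _ = (((∑ i ∈ Finset.range (g + 1), r ^ i * m : ℕ) : ℝ≥0∞)) ^ k := by
        rw [← hNcard, ← mul_assoc, ENNReal.inv_mul_cancel hcg0 (ENNReal.natCast_ne_top _),
          one_mul]
end

section
/- Suppose qr > 1 and fix q̃ ∈ (0,q) with q̃r > 1, δ ∈ (0, min(q̃r − 1, 1)), and an integer g ≥ 1 with (q̃r − 1 − δ)(q̃r)^{g−1} > 1 + δ. There exist constants ε, d, D > 0 such that for every n > r and every m ≥ 1 with m ≤ εn, P_n( there exists A ⊆ V_n with |A| = m such that ψ(A) is not robust ) ≤ D e^{−dm}. -/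
open MeasureTheory
open scoped ENNReal
namespace NRB
open Tvert
variable {n r m g : ℕ}

theorem key_length (σ : Tvert m g r) : (key σ).length = len σ + 1 := by
  simp [key, len]

theorem key_inj : Function.Injective (key (m := m) (g := g) (r := r)) := by
  rintro ⟨a, ⟨i, f⟩⟩ ⟨b, ⟨j, g⟩⟩ h
  simp only [key, List.cons.injEq] at h
  obtain ⟨h1, h2⟩ := h
  have hlen : (i : ℕ) = (j : ℕ) := by
    have := congrArg List.length h2
    simpa using this
  have hfst : a = b := Fin.ext h1
  subst hfst
  have hij : i = j := Fin.ext hlen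
  subst hij
  have hfg : f = g := by
    have h5 : List.ofFn f = List.ofFn g :=
      List.map_injective_iff.mpr Fin.val_injective h2
    exact List.ofFn_injective h5
  rw [hfg]

theorem prec_irrefl (σ : Tvert m g r) : ¬ prec σ σ := by
  rintro (h | ⟨-, h⟩)
  · omega
  · exact irrefl_of (List.Lex (· < ·)) _ h

theorem prec_trans {a b c : Tvert m g r} (h1 : prec a b) (h2 : prec b c) : prec a c := by
  rcases h1 with h1 | ⟨e1, l1⟩ <;> rcases h2 with h2 | ⟨e2, l2⟩
  · exact Or.inl (h1.trans h2)
  · exact Or.inl (e2 ▸ h1)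
  · exact Or.inl (e1 ▸ h2)
  · exact Or.inr ⟨e1.trans e2, List.lex_trans Nat.lt_trans l1 l2⟩

theorem prec_trichotomy (σ σ' : Tvert m g r) : prec σ σ' ∨ σ = σ' ∨ prec σ' σ := by
  rcases Nat.lt_trichotomy (len σ) (len σ') with h | h | h
  · exact Or.inl (Or.inl h)
  · rcases trichotomous_of (List.Lex (· < ·)) (key σ) (key σ') with hl | hl | hl
    · exact Or.inl (Or.inr ⟨h, hl⟩)
    · exact Or.inr (Or.inl (key_inj hl))
    · exact Or.inr (Or.inr (Or.inr ⟨h.symm, hl⟩))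
  · exact Or.inr (Or.inr (Or.inl h))

open scoped Classical in
noncomputable def enc (σ : Tvert m g r) : ℕ :=
  (Finset.univ.filter fun σ' => prec σ' σ).card

theorem enc_lt {a b : Tvert m g r} (h : prec a b) : enc a < enc b := by
  classical
  apply Finset.card_lt_card
  constructor
  · intro x hx
    simp only [enc, Finset.mem_filter, Finset.mem_univ, true_and] at hx ⊢
    exact prec_trans hx h
  · intro hsub
    have ha : a ∈ Finset.univ.filter fun σ' => prec σ' b := by
      simp [Finset.mem_filter, h]
    have := hsub ha
    simp only [Finset.mem_filter, Finset.mem_univ, true_and] at this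
    exact prec_irrefl a this


theorem len_lt (σ : Tvert m g r) : len σ < g + 1 := σ.2.1.2

theorem len_trunc (σ : Tvert m g r) (l : ℕ) : len (trunc σ l) = min l (len σ) := rfl

theorem len_trunc_of_le {σ : Tvert m g r} {l : ℕ} (h : l ≤ len σ) : len (trunc σ l) = l := by
  simp [len_trunc, h]

theorem ofFn_trunc (σ : Tvert m g r) (l : ℕ) :
    List.ofFn (trunc σ l).2.2 = (List.ofFn σ.2.2).take l := by
  apply List.ext_getElem
  · simp [trunc, len]
  · intro i h1 h2
    simp [trunc, List.getElem_ofFn]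

theorem trunc_eq_self (σ : Tvert m g r) : trunc σ (len σ) = σ := by
  obtain ⟨a, ⟨i, f⟩⟩ := σ
  refine Prod.ext rfl ?_
  refine Sigma.ext ?_ ?_
  · exact Fin.ext (by simp [trunc, len])
  · rw [Fin.heq_fun_iff (by simp [trunc, len])]
    intro k
    rfl

theorem trunc_trunc (σ : Tvert m g r) {l l' : ℕ} (h : l' ≤ l) :
    trunc (trunc σ l) l' = trunc σ l' := by
  refine Prod.ext rfl ?_
  refine Sigma.ext ?_ ?_
  · exact Fin.ext (by simp [trunc, len]; omega)
  · rw [Fin.heq_fun_iff (by simp [trunc, len]; omega)]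
    intro k
    rfl

theorem trunc_prec {σ : Tvert m g r} {l : ℕ} (h : l < len σ) : prec (trunc σ l) σ :=
  Or.inl (by rw [len_trunc_of_le h.le]; exact h)

/-- the parent of a vertex -/
def parent (σ : Tvert m g r) : Tvert m g r := trunc σ (len σ - 1)

theorem len_parent {σ : Tvert m g r} (h : 0 < len σ) : len (parent σ) = len σ - 1 :=
  len_trunc_of_le (by omega)

theorem parent_prec {σ : Tvert m g r} (h : 0 < len σ) : prec (parent σ) σ :=
  trunc_prec (by omega)

/-- last coordinate of a vertex (junk value for roots) -/
def lastIdx (hr : 0 < r) (σ : Tvert m g r) : Fin r :=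
  if h : 0 < len σ then σ.2.2 ⟨len σ - 1, Nat.sub_lt h Nat.one_pos⟩ else ⟨0, hr⟩

theorem ofFn_eq_append (σ : Tvert m g r) (hr : 0 < r) (h : 0 < len σ) :
    List.ofFn σ.2.2 = (List.ofFn σ.2.2).take (len σ - 1) ++ [lastIdx hr σ] := by
  have hlen : (List.ofFn σ.2.2).length = len σ := by simp [len]
  have h1 : (List.ofFn σ.2.2).drop (len σ - 1) = [lastIdx hr σ] := by
    rw [List.drop_eq_getElem_cons (by omega)]
    have h2 : (List.ofFn σ.2.2).drop (len σ - 1 + 1) = [] := by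
      apply List.drop_eq_nil_of_le; omega
    rw [h2]
    congr 1
    rw [List.getElem_ofFn]
    simp [lastIdx, h]
  conv_lhs => rw [← List.take_append_drop (len σ - 1) (List.ofFn σ.2.2)]
  rw [h1]

theorem zvert_root (y : Fin n → Fin r → Fin n) (A : Finset (Fin n)) (hA : A.card = m)
    {σ : Tvert m g r} (h : len σ = 0) :
    zvert y A hA σ = (A.orderIsoOfFin hA σ.1 : Fin n) := by
  unfold zvert
  have : List.ofFn σ.2.2 = [] := by
    apply List.eq_nil_of_length_eq_zero; simp [len] at h ⊢; exact h
  rw [this]; rfl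

theorem zvert_trunc (y : Fin n → Fin r → Fin n) (A : Finset (Fin n)) (hA : A.card = m)
    (σ : Tvert m g r) (l : ℕ) :
    zvert y A hA (trunc σ l) =
      ((List.ofFn σ.2.2).take l).foldl (fun v j => y v j) (A.orderIsoOfFin hA σ.1 : Fin n) := by
  unfold zvert
  rw [ofFn_trunc]
  rfl

theorem zvert_succ (hr : 0 < r) (y : Fin n → Fin r → Fin n) (A : Finset (Fin n))
    (hA : A.card = m) {σ : Tvert m g r} (h : 0 < len σ) :
    zvert y A hA σ = y (zvert y A hA (parent σ)) (lastIdx hr σ) := by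
  conv_lhs => rw [zvert, ofFn_eq_append σ hr h]
  rw [List.foldl_append, parent, zvert_trunc]
  simp

theorem key_trunc (σ : Tvert m g r) (l : ℕ) :
    key (trunc σ l) = (key σ).take (l + 1) := by
  simp only [key, List.take_succ_cons, ofFn_trunc, List.map_take]
  rfl

theorem lex_take {a b : List ℕ} (h : List.Lex (· < ·) a b) (j : ℕ) :
    a.take j = b.take j ∨ List.Lex (· < ·) (a.take j) (b.take j) := by
  induction h generalizing j with
  | nil =>
    cases j with
    | zero => exact Or.inl rfl
    | succ j => exact Or.inr List.Lex.nil
  | @cons a l1 l2 h ih =>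
    cases j with
    | zero => exact Or.inl rfl
    | succ j =>
      rcases ih j with h' | h'
      · exact Or.inl (by simp [List.take_succ_cons, h'])
      · exact Or.inr (by rw [List.take_succ_cons, List.take_succ_cons]; exact List.Lex.cons h')
  | @rel a l1 b l2 hab =>
    cases j with
    | zero => exact Or.inl rfl
    | succ j => exact Or.inr (List.Lex.rel hab)

theorem key_parent_last (hr : 0 < r) {σ : Tvert m g r} (h : 0 < len σ) :
    key σ = key (parent σ) ++ [(lastIdx hr σ : ℕ)] := by
  conv_lhs => rw [key, ofFn_eq_append σ hr h]
  rw [List.map_append]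
  simp only [key, parent, ofFn_trunc, List.map_take, List.cons_append]
  rfl

theorem parent_eq_last_eq {ρ σ : Tvert m g r} (hr : 0 < r) (hρ : 0 < len ρ) (hσ : 0 < len σ)
    (hlen : len ρ = len σ) (hp : parent ρ = parent σ) (hl : lastIdx hr ρ = lastIdx hr σ) :
    ρ = σ := by
  apply key_inj
  rw [key_parent_last hr hρ, key_parent_last hr hσ, hp, hl]

theorem parent_prec_or_eq {ρ σ : Tvert m g r} (h : prec ρ σ) (hρ : 0 < len ρ) (hσ : 0 < len σ) :
    prec (parent ρ) (parent σ) ∨ (len ρ = len σ ∧ parent ρ = parent σ) := by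
  rcases h with h | ⟨e, lex⟩
  · left; exact Or.inl (by rw [len_parent hρ, len_parent hσ]; omega)
  · have hkρ : key (parent ρ) = (key ρ).take (len ρ) := by
      rw [parent, key_trunc]
      congr 1
      omega
    have hkσ : key (parent σ) = (key σ).take (len σ) := by
      rw [parent, key_trunc]
      congr 1
      omega
    rcases lex_take lex (len ρ) with h' | h'
    · right
      refine ⟨e, key_inj ?_⟩
      rw [hkρ, hkσ, ← e, h']
    · left
      right
      constructor
      · rw [len_parent hρ, len_parent hσ]; omega
      · rw [hkρ, hkσ, ← e]; exact h'


section Graph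
open scoped Classical
variable {y : Fin n → Fin r → Fin n} {A : Finset (Fin n)} {hA : A.card = m}

theorem mem_J {B : Finset (Tvert m g r)} {σ' : Tvert m g r} :
    σ' ∈ J B ↔ ∃ σ ∈ B, edge σ σ' := by
  simp [J]

theorem mem_Aseen {σ : Tvert m g r} {v : Fin n} :
    v ∈ Aseen y A hA σ ↔ ∃ σ', prec σ' σ ∧ zvert y A hA σ' = v := by
  simp [Aseen]

def child (σ : Tvert m g r) (h : len σ + 1 < g + 1) (a : Fin r) : Tvert m g r :=
  ⟨σ.1, ⟨⟨len σ + 1, h⟩, Fin.snoc σ.2.2 a⟩⟩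

theorem len_child (σ : Tvert m g r) (h : len σ + 1 < g + 1) (a : Fin r) :
    len (child σ h a) = len σ + 1 := rfl

theorem trunc_child (σ : Tvert m g r) (h : len σ + 1 < g + 1) (a : Fin r) :
    trunc (child σ h a) (len σ) = σ := by
  obtain ⟨b, ⟨i, f⟩⟩ := σ
  refine Prod.ext rfl ?_
  refine Sigma.ext ?_ ?_
  · exact Fin.ext (by simp [trunc, child, len])
  · rw [Fin.heq_fun_iff (by simp [trunc, child, len])]
    intro k
    have hk : (k : ℕ) < (i : ℕ) := by
      have := k.2
      simpa [trunc, child, len] using this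
    simp only [trunc, child, len, Fin.snoc, hk, dif_pos]
    rfl

theorem edge_child (σ : Tvert m g r) (h : len σ + 1 < g + 1) (a : Fin r) :
    edge σ (child σ h a) := ⟨rfl, trunc_child σ h a⟩

theorem lastIdx_child (hr : 0 < r) (σ : Tvert m g r) (h : len σ + 1 < g + 1) (a : Fin r) :
    lastIdx hr (child σ h a) = a := by
  have h0 : 0 < len (child σ h a) := by rw [len_child]; omega
  rw [lastIdx, dif_pos h0]
  exact Fin.snoc_last (α := fun _ => Fin r) a σ.2.2

theorem card_J_ge {B : Finset (Tvert m g r)} {j : ℕ} (hB : ∀ σ ∈ B, len σ = j)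
    (hj : j < g) : r * B.card ≤ (J B).card := by
  classical
  have hle := Finset.card_le_card_of_injOn
    (f := fun p : Tvert m g r × Fin r =>
      if h : len p.1 + 1 < g + 1 then child p.1 h p.2 else p.1)
    (s := B ×ˢ Finset.univ) (t := J B) ?_ ?_
  · calc r * B.card = (B ×ˢ (Finset.univ : Finset (Fin r))).card := by
          simp [Finset.card_product, mul_comm]
      _ ≤ (J B).card := hle
  · intro p hp
    simp only [Finset.mem_coe, Finset.mem_product] at hp
    have hlen : len p.1 + 1 < g + 1 := by rw [hB p.1 hp.1]; omega
    dsimp only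
    rw [dif_pos hlen]
    exact mem_J.mpr ⟨p.1, hp.1, edge_child p.1 hlen p.2⟩
  · intro p hp q hq hpq
    simp only [Finset.coe_product, Set.mem_prod, Finset.mem_coe] at hp hq
    have hlp : len p.1 + 1 < g + 1 := by rw [hB p.1 hp.1]; omega
    have hlq : len q.1 + 1 < g + 1 := by rw [hB q.1 hq.1]; omega
    dsimp only at hpq
    rw [dif_pos hlp, dif_pos hlq] at hpq
    have hr : 0 < r := p.2.pos
    have h1 : p.1 = q.1 := by
      have e1 := trunc_child p.1 hlp p.2
      have e2 := trunc_child q.1 hlq q.2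
      have hjj : len p.1 = len q.1 := by rw [hB p.1 hp.1, hB q.1 hq.1]
      rw [← e1, ← e2, hjj, hpq]
    have h2 : p.2 = q.2 := by
      have e1 := lastIdx_child hr p.1 hlp p.2
      have e2 := lastIdx_child hr q.1 hlq q.2
      rw [← e1, ← e2, hpq]
    exact Prod.ext h1 h2

theorem key_root {σ : Tvert m g r} (h : len σ = 0) : key σ = [(σ.1 : ℕ)] := by
  have : List.ofFn σ.2.2 = [] := by
    apply List.eq_nil_of_length_eq_zero
    simp only [List.length_ofFn]
    exact h
  simp [key, this]

theorem psi_root (h : len σ = 0) : psi (g := g) y A hA σ = false := by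
  rw [psi]; simp [h]

theorem psi_true_iff {σ : Tvert m g r} (h : 0 < len σ) :
    psi y A hA σ = true ↔
      zvert y A hA σ ∈ Aseen y A hA σ ∧
        ∀ l, l < len σ → psi y A hA (trunc σ l) = false := by
  rw [psi, dif_neg (by omega)]
  simp only [Bool.and_eq_true, decide_eq_true_eq, Bool.not_eq_true', List.any_eq_false,
    List.mem_range]
  constructor
  · rintro ⟨h1, h2⟩
    refine ⟨h1, fun l hl => ?_⟩
    have := h2 l hl
    rw [dif_pos hl] at this
    simpa using this
  · rintro ⟨h1, h2⟩
    refine ⟨h1, fun l hl => ?_⟩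
    rw [dif_pos hl]
    simp [h2 l hl]

def Fresh (y : Fin n → Fin r → Fin n) (A : Finset (Fin n)) (hA : A.card = m)
    (σ : Tvert m g r) : Prop :=
  ∀ l, 1 ≤ l → l < len σ → zvert y A hA (trunc σ l) ∉ Aseen y A hA (trunc σ l)

theorem psi_true_elim {σ : Tvert m g r} (h : psi y A hA σ = true) :
    0 < len σ ∧ zvert y A hA σ ∈ Aseen y A hA σ ∧ Fresh y A hA σ := by
  have hlen : 0 < len σ := by
    by_contra h0
    rw [psi_root (by omega)] at h
    exact Bool.false_ne_true h
  obtain ⟨hz, hpre⟩ := (psi_true_iff hlen).mp h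
  refine ⟨hlen, hz, ?_⟩
  intro l hl1 hl2 hmem
  have hfalse := hpre l hl2
  have h0 : 0 < len (trunc σ l) := by rw [len_trunc_of_le hl2.le]; omega
  have : psi y A hA (trunc σ l) = true := by
    rw [psi_true_iff h0]
    refine ⟨hmem, fun l' hl' => ?_⟩
    rw [len_trunc_of_le hl2.le] at hl'
    rw [trunc_trunc σ hl'.le]
    exact hpre l' (by omega)
  rw [this] at hfalse
  simp at hfalse

theorem psi_congr (y1 y2 : Fin n → Fin r → Fin n) (A : Finset (Fin n)) (hA : A.card = m) :
    ∀ (L : ℕ) (σ : Tvert m g r), len σ ≤ L →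
      (∀ ρ, (prec ρ σ ∨ ρ = σ) → zvert y1 A hA ρ = zvert y2 A hA ρ) →
      psi y1 A hA σ = psi y2 A hA σ := by
  intro L
  induction L with
  | zero =>
    intro σ hL hz
    rw [psi_root (by omega), psi_root (by omega)]
  | succ L ih =>
    intro σ hL hz
    rcases Nat.eq_zero_or_pos (len σ) with h0 | h0
    · rw [psi_root h0, psi_root h0]
    · have hAs : Aseen y1 A hA σ = Aseen y2 A hA σ := by
        apply Finset.image_congr
        intro x hx
        simp only [Finset.coe_filter, Finset.mem_univ, true_and, Set.mem_setOf_eq] at hx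
        exact hz x (Or.inl hx)
      have hzσ : zvert y1 A hA σ = zvert y2 A hA σ := hz σ (Or.inr rfl)
      have hpre : ∀ l, l < len σ →
          psi y1 A hA (trunc σ l) = psi y2 A hA (trunc σ l) := by
        intro l hl
        apply ih (trunc σ l) (by rw [len_trunc_of_le hl.le]; omega)
        intro ρ hρ
        apply hz
        left
        rcases hρ with hρ | hρ
        · exact prec_trans hρ (trunc_prec hl)
        · rw [hρ]; exact trunc_prec hl
      rw [Bool.eq_iff_iff]
      rw [psi_true_iff h0, psi_true_iff h0, hAs, hzσ]
      constructor
      · rintro ⟨h1, h2⟩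
        exact ⟨h1, fun l hl => (hpre l hl) ▸ h2 l hl⟩
      · rintro ⟨h1, h2⟩
        exact ⟨h1, fun l hl => (hpre l hl) ▸ h2 l hl⟩

noncomputable def qc (hr : 0 < r) (y : Fin n → Fin r → Fin n) (A : Finset (Fin n)) (hA : A.card = m)
    (σ : Tvert m g r) : Fin n × Fin r :=
  (zvert y A hA (parent σ), lastIdx hr σ)

theorem qc_ne (hr : 0 < r) {ρ σ : Tvert m g r} (hρσ : prec ρ σ) (hρ : 0 < len ρ)
    (hσ : 0 < len σ) (hfresh : Fresh y A hA σ) :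
    qc hr y A hA ρ ≠ qc hr y A hA σ := by
  intro he
  have hz : zvert y A hA (parent ρ) = zvert y A hA (parent σ) := congrArg Prod.fst he
  have hlast : lastIdx hr ρ = lastIdx hr σ := congrArg Prod.snd he
  rcases parent_prec_or_eq hρσ hρ hσ with hp | ⟨hlen, hp⟩
  · rcases Nat.eq_zero_or_pos (len (parent σ)) with h0 | h0
    · have h0ρ : len (parent ρ) = 0 := by
        rcases hp with hp | ⟨e, -⟩
        · omega
        · omega
      have hk : List.Lex (· < ·) (key (parent ρ)) (key (parent σ)) := by
        rcases hp with hp | hp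
        · omega
        · exact hp.2
      rw [key_root h0ρ, key_root h0, List.lex_singleton_iff] at hk
      rw [zvert_root y A hA h0ρ, zvert_root y A hA h0] at hz
      have : (parent ρ).1 = (parent σ).1 :=
        (A.orderIsoOfFin hA).injective (Subtype.coe_injective hz)
      rw [this] at hk
      omega
    · have hmem : zvert y A hA (parent σ) ∈ Aseen y A hA (parent σ) :=
        mem_Aseen.mpr ⟨parent ρ, hp, hz⟩
      have hps := len_parent hσ
      exact hfresh (len σ - 1) (by omega) (by omega) hmem
  · exact absurd (parent_eq_last_eq hr hρ hσ hlen hp hlast)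
      (fun hEq => prec_irrefl σ (hEq ▸ hρσ))

theorem zvert_agree (hr : 0 < r) {p : Fin n → Fin r → Fin n} {θ : Tvert m g r}
    (hθ : 0 < len θ) (hfresh : Fresh y A hA θ)
    (hagree : ∀ v i, (v, i) ≠ qc hr y A hA θ → p v i = y v i) :
    ∀ ρ, prec ρ θ → zvert p A hA ρ = zvert y A hA ρ := by
  suffices H : ∀ (L : ℕ) (ρ : Tvert m g r), len ρ ≤ L → prec ρ θ →
      zvert p A hA ρ = zvert y A hA ρ by
    exact fun ρ h => H (len ρ) ρ le_rfl h
  intro L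
  induction L with
  | zero =>
    intro ρ hL hρθ
    rw [zvert_root p A hA (by omega), zvert_root y A hA (by omega)]
  | succ L ih =>
    intro ρ hL hρθ
    rcases Nat.eq_zero_or_pos (len ρ) with h0 | h0
    · rw [zvert_root p A hA h0, zvert_root y A hA h0]
    · rw [zvert_succ hr p A hA h0, zvert_succ hr y A hA h0]
      have hpar : zvert p A hA (parent ρ) = zvert y A hA (parent ρ) :=
        ih (parent ρ) (by rw [len_parent h0]; omega) (prec_trans (parent_prec h0) hρθ)
      rw [hpar]
      exact hagree _ _ (qc_ne hr hρθ h0 hθ hfresh)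

end Graph


section PartA
open Finset

theorem robust_of_few {qt δ : ℝ} (hqt : 0 ≤ qt) (hq : 1 ≤ qt * r) (hδ : 0 ≤ δ)
    (ψ : Tvert m g r → Bool)
    (hN : ((Finset.univ.filter fun σ => ψ σ = true).card : ℝ) ≤ (1 + δ) * m) :
    Robust qt δ ψ := by
  classical
  rintro i Bs ⟨⟨hig, hB0, hfam⟩, hzero, h0card, hstep⟩
  refine ⟨⟨⟨hig, hB0, hfam⟩, hzero, h0card, hstep⟩, ?_⟩
  have hlen : ∀ j, j ≤ i → ∀ σ ∈ Bs j, len σ = j := by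
    intro j
    induction j with
    | zero => intro _ σ hσ; exact hB0 σ hσ
    | succ j ih =>
      intro hj σ hσ
      have hsub := hfam j (by omega)
      obtain ⟨σ0, hσ0, he⟩ := mem_J.mp (hsub hσ)
      rw [he.1, ih (by omega) σ0 hσ0]
  set N : ℕ := (Finset.univ.filter fun σ => ψ σ = true).card with hNdef
  set loss : ℕ → ℕ := fun j => ((J (Bs j)).filter fun σ => ψ σ = true).card with hloss
  have hJcard : ∀ j, ((J (Bs j)).card : ℝ) = ((Jzero ψ (Bs j)).card : ℝ) + (loss j : ℝ) := by
    intro j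
    have h4 : ((J (Bs j)).filter fun σ => ψ σ = false)
        = J (Bs j) \ ((J (Bs j)).filter fun σ => ψ σ = true) := by
      rw [← Finset.filter_not]
      apply Finset.filter_congr
      intro x _
      simp
    have h5 : loss j ≤ (J (Bs j)).card := Finset.card_le_card (Finset.filter_subset _ _)
    have h6 : (Jzero ψ (Bs j)).card = (J (Bs j)).card - loss j := by
      rw [Jzero, h4, Finset.card_sdiff_of_subset (Finset.filter_subset _ _)]
    have h1 : (Jzero ψ (Bs j)).card + loss j = (J (Bs j)).card := by omega
    push_cast [← h1]
    ring
  have hJge : ∀ j, j ≤ i → (r : ℝ) * ((Bs j).card : ℝ) ≤ ((J (Bs j)).card : ℝ) := by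
    intro j hj
    exact_mod_cast card_J_ge (fun σ hσ => hlen j hj σ hσ) (by omega)
  have hlosssum : ∀ j, j ≤ i → (∑ t ∈ Finset.range (j+1), (loss t : ℝ)) ≤ (N : ℝ) := by
    intro j hj
    have hdisj : ∀ t1 ∈ Finset.range (j+1), ∀ t2 ∈ Finset.range (j+1), t1 ≠ t2 →
        Disjoint ((J (Bs t1)).filter fun σ => ψ σ = true)
          ((J (Bs t2)).filter fun σ => ψ σ = true) := by
      intro t1 ht1 t2 ht2 hne
      simp only [Finset.mem_range] at ht1 ht2
      rw [Finset.disjoint_left]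
      intro σ hσ1 hσ2
      simp only [Finset.mem_filter] at hσ1 hσ2
      obtain ⟨σ1, hσ1', he1⟩ := mem_J.mp hσ1.1
      obtain ⟨σ2, hσ2', he2⟩ := mem_J.mp hσ2.1
      have l1 : len σ = t1 + 1 := by rw [he1.1, hlen t1 (by omega) σ1 hσ1']
      have l2 : len σ = t2 + 1 := by rw [he2.1, hlen t2 (by omega) σ2 hσ2']
      omega
    have hcard : ∑ t ∈ Finset.range (j+1), loss t
        = ((Finset.range (j+1)).biUnion fun t =>
            (J (Bs t)).filter fun σ => ψ σ = true).card :=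
      (Finset.card_biUnion hdisj).symm
    have hsub : ((Finset.range (j+1)).biUnion fun t =>
        (J (Bs t)).filter fun σ => ψ σ = true)
          ⊆ Finset.univ.filter fun σ => ψ σ = true := by
      intro σ hσ
      simp only [Finset.mem_biUnion, Finset.mem_filter] at hσ ⊢
      obtain ⟨t, -, -, h2⟩ := hσ
      exact ⟨Finset.mem_univ σ, h2⟩
    have : ∑ t ∈ Finset.range (j+1), loss t ≤ N := by
      rw [hcard, hNdef]
      exact Finset.card_le_card hsub
    calc ∑ t ∈ Finset.range (j+1), (loss t : ℝ) = ((∑ t ∈ Finset.range (j+1), loss t : ℕ) : ℝ) := by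
          push_cast; ring
      _ ≤ (N : ℝ) := by exact_mod_cast this
  have hqr0 : (0:ℝ) ≤ qt * r := by linarith
  have main : ∀ j, j ≤ i →
      (qt * r) ^ (j+1) * m - (∑ t ∈ Finset.range (j+1), (qt*r)^(j-t) * (loss t : ℝ))
        ≤ ((Jzero ψ (Bs j)).card : ℝ) := by
    intro j
    induction j with
    | zero =>
      intro hj
      rw [show (0:ℕ)+1 = 1 from rfl, Finset.sum_range_one, pow_one]
      norm_num
      have h1 := hJcard 0
      have h2 := hJge 0 (by omega)
      have h3 : qt * m ≤ ((Bs 0).card : ℝ) := h0card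
      have hr0 : (0:ℝ) ≤ r := by positivity
      nlinarith
    | succ j ih =>
      intro hj
      have ihj := ih (by omega)
      have hstepj := hstep j (by omega)
      have h1 := hJcard (j+1)
      have h2 := hJge (j+1) hj
      rw [Finset.sum_range_succ]
      have hshift : ∀ t ∈ Finset.range (j+1), (qt*r)^(j+1-t) * (loss t : ℝ)
          = (qt*r) * ((qt*r)^(j-t) * (loss t : ℝ)) := by
        intro t ht
        simp only [Finset.mem_range] at ht
        have he : j + 1 - t = (j - t) + 1 := by omega
        rw [he, pow_succ]
        ring
      rw [Finset.sum_congr rfl hshift, ← Finset.mul_sum]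
      have hzj : (0:ℝ) ≤ ((Jzero ψ (Bs j)).card : ℝ) := by positivity
      have hlossj : (0:ℝ) ≤ (loss (j+1) : ℝ) := by positivity
      have hkey : (qt * r) * ((qt*r)^(j+1) * m
          - ∑ t ∈ Finset.range (j+1), (qt*r)^(j-t) * (loss t : ℝ))
            ≤ (r : ℝ) * ((Bs (j+1)).card : ℝ) := by
        have : (qt * r) * ((Jzero ψ (Bs j)).card : ℝ) ≤ (r : ℝ) * ((Bs (j+1)).card : ℝ) := by
          have := mul_le_mul_of_nonneg_left hstepj (by positivity : (0:ℝ) ≤ (r:ℝ))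
          nlinarith
        nlinarith [mul_le_mul_of_nonneg_left ihj hqr0]
      have hsimp : (qt*r)^(j+1+1) * m = (qt*r) * ((qt*r)^(j+1) * m) := by ring
      rw [hsimp]
      simp only [Nat.sub_self, pow_zero, one_mul]
      nlinarith [hkey]
  intro j hj
  have hm := main j hj
  have hw : ∑ t ∈ Finset.range (j+1), (qt*r)^(j-t) * (loss t : ℝ)
      ≤ (qt*r)^j * ((1+δ) * m) := by
    have h1 : ∑ t ∈ Finset.range (j+1), (qt*r)^(j-t) * (loss t : ℝ)
        ≤ ∑ t ∈ Finset.range (j+1), (qt*r)^j * (loss t : ℝ) := by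
      apply Finset.sum_le_sum
      intro t ht
      apply mul_le_mul_of_nonneg_right _ (by positivity)
      exact pow_le_pow_right₀ hq (by omega)
    rw [← Finset.mul_sum] at h1
    calc ∑ t ∈ Finset.range (j+1), (qt*r)^(j-t) * (loss t : ℝ)
        ≤ (qt*r)^j * ∑ t ∈ Finset.range (j+1), (loss t : ℝ) := h1
      _ ≤ (qt*r)^j * ((1+δ) * m) := by
          apply mul_le_mul_of_nonneg_left _ (by positivity)
          exact (hlosssum j hj).trans hN
  have hpowpos : (0:ℝ) ≤ (qt*r)^j := by positivity
  have hfin : (qt * r - 1 - δ) * (qt * r) ^ j * m ≤ ((Jzero ψ (Bs j)).card : ℝ) := by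
    have he : (qt*r)^(j+1) * m = (qt*r)^j * (qt*r) * m := by ring
    nlinarith [hm, hw]
  exact hfin

end PartA


section Core
open Finset
open scoped Classical

theorem isGraph_update {y : Fin n → Fin r → Fin n} (hy : IsGraph y) (v0 : Fin n) (i0 : Fin r)
    {w : Fin n} (hw : w ∉ insert v0 ((Finset.univ.erase i0).image (y v0))) :
    IsGraph (Function.update y v0 (Function.update (y v0) i0 w)) := by
  have hv : w ≠ v0 := by intro h; exact hw (by simp [h])
  have hother : ∀ i : Fin r, i ≠ i0 → y v0 i ≠ w := by
    intro i hi he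
    exact hw (Finset.mem_insert_of_mem (Finset.mem_image.mpr
      ⟨i, Finset.mem_erase.mpr ⟨hi, Finset.mem_univ i⟩, he⟩))
  intro x
  by_cases hx : x = v0
  · subst hx
    rw [Function.update_self]
    constructor
    · intro i j hij
      rcases eq_or_ne i i0 with hi | hi <;> rcases eq_or_ne j i0 with hj | hj
      · rw [hi, hj]
      · subst hi
        rw [Function.update_self, Function.update_of_ne hj] at hij
        exact absurd hij.symm (hother j hj)
      · subst hj
        rw [Function.update_self, Function.update_of_ne hi] at hij
        exact absurd hij (hother i hi)
      · rw [Function.update_of_ne hi, Function.update_of_ne hj] at hij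
        exact (hy x).1 hij
    · intro i
      rcases eq_or_ne i i0 with hi | hi
      · subst hi; rw [Function.update_self]; exact hv
      · rw [Function.update_of_ne hi]; exact (hy x).2 i
  · rw [Function.update_of_ne hx]
    exact hy x

theorem core_count (hrpos : 0 < r) (A : Finset (Fin n)) (hA : A.card = m)
    (τf : Tvert m g r → Tvert m g r) (S : Finset (Tvert m g r)) :
    (Finset.univ.filter fun y : Fin n → Fin r → Fin n => IsGraph y ∧ ∀ a ∈ S,
        prec (τf a) a ∧ psi (g := g) y A hA a = true ∧
        zvert y A hA (τf a) = zvert y A hA a).card * (n - r) ^ S.card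
      ≤ (Finset.univ.filter fun y : Fin n → Fin r → Fin n => IsGraph y).card := by
  classical
  induction S using Finset.strongInduction with
  | _ S ih =>
  rcases Finset.eq_empty_or_nonempty S with rfl | hS
  · simp only [Finset.card_empty, pow_zero, mul_one]
    apply Finset.card_le_card
    intro y hy
    simp only [Finset.mem_filter] at hy ⊢
    exact ⟨hy.1, hy.2.1⟩
  · obtain ⟨σm, hσm, hmax⟩ := Finset.exists_max_image S enc hS
    have hprec_max : ∀ a ∈ S.erase σm, prec a σm := by
      intro a ha
      have haS : a ∈ S := Finset.mem_of_mem_erase ha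
      have hne : a ≠ σm := Finset.ne_of_mem_erase ha
      rcases prec_trichotomy a σm with h | h | h
      · exact h
      · exact absurd h hne
      · have h1 := enc_lt h
        have h2 := hmax a haS
        omega
    have claim : (Finset.univ.filter fun y : Fin n → Fin r → Fin n => IsGraph y ∧ ∀ a ∈ S,
          prec (τf a) a ∧ psi (g := g) y A hA a = true ∧
          zvert y A hA (τf a) = zvert y A hA a).card * (n - r)
        ≤ (Finset.univ.filter fun y : Fin n → Fin r → Fin n => IsGraph y ∧
            ∀ a ∈ S.erase σm,
            prec (τf a) a ∧ psi (g := g) y A hA a = true ∧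
            zvert y A hA (τf a) = zvert y A hA a).card := by
      set E := Finset.univ.filter fun y : Fin n → Fin r → Fin n => IsGraph y ∧ ∀ a ∈ S,
        prec (τf a) a ∧ psi (g := g) y A hA a = true ∧
        zvert y A hA (τf a) = zvert y A hA a with hE
      set E' := Finset.univ.filter fun y : Fin n → Fin r → Fin n => IsGraph y ∧
        ∀ a ∈ S.erase σm,
        prec (τf a) a ∧ psi (g := g) y A hA a = true ∧
        zvert y A hA (τf a) = zvert y A hA a with hE'
      set Res : (Fin n → Fin r → Fin n) → Finset (Fin n → Fin r → Fin n) := fun y =>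
        Finset.univ.filter fun y' => IsGraph y' ∧
          ∀ v i, (v, i) ≠ qc hrpos y A hA σm → y' v i = y v i with hRes
      have hEfacts : ∀ y ∈ E, IsGraph y ∧ psi (g := g) y A hA σm = true ∧
          prec (τf σm) σm ∧ zvert y A hA (τf σm) = zvert y A hA σm := by
        intro y hy
        rw [hE, Finset.mem_filter] at hy
        exact ⟨hy.2.1, (hy.2.2 σm hσm).2.1, (hy.2.2 σm hσm).1, (hy.2.2 σm hσm).2.2⟩
      -- (i) each Res y is large
      have hResCard : ∀ y ∈ E, n - r ≤ (Res y).card := by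
        intro y hy
        obtain ⟨hyG, hψ, -, -⟩ := hEfacts y hy
        set v0 := (qc hrpos y A hA σm).1 with hv0
        set i0 := (qc hrpos y A hA σm).2 with hi0
        set bad := insert v0 ((Finset.univ.erase i0).image (y v0)) with hbad
        have hallow : (Finset.univ \ bad).card ≤ (Res y).card := by
          apply Finset.card_le_card_of_injOn
            (f := fun w => Function.update y v0 (Function.update (y v0) i0 w))
          · intro w hw
            rw [Finset.mem_coe, Finset.mem_sdiff] at hw
            rw [Finset.mem_coe, hRes, Finset.mem_filter]; beta_reduce
            refine ⟨Finset.mem_univ _, isGraph_update hyG v0 i0 hw.2, ?_⟩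
            intro v i hvi
            rcases eq_or_ne v v0 with hv | hv
            · subst hv
              rw [Function.update_self]
              have hii : i ≠ i0 := by
                intro h
                exact hvi (by rw [h, hv0, hi0])
              rw [Function.update_of_ne hii]
            · rw [Function.update_of_ne hv]
          · intro w1 h1 w2 h2 he
            have := congrFun (congrFun he v0) i0
            simp only [Function.update_self] at this
            exact this
        have hbadcard : bad.card ≤ r := by
          calc bad.card ≤ ((Finset.univ.erase i0).image (y v0)).card + 1 :=
                Finset.card_insert_le _ _
            _ ≤ (Finset.univ.erase i0).card + 1 :=
                Nat.add_le_add_right (Finset.card_image_le) 1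
            _ = (r - 1) + 1 := by
                rw [Finset.card_erase_of_mem (Finset.mem_univ i0), Finset.card_univ,
                  Fintype.card_fin]
            _ ≤ r := by omega
        have : n - r ≤ (Finset.univ \ bad).card := by
          rw [Finset.card_sdiff_of_subset (Finset.subset_univ _), Finset.card_univ, Fintype.card_fin]
          omega
        omega
      -- agreement facts
      have hAgree : ∀ y ∈ E, ∀ y' ∈ Res y, ∀ ρ, prec ρ σm →
          zvert y' A hA ρ = zvert y A hA ρ := by
        intro y hy y' hy' ρ hρ
        obtain ⟨hyG, hψ, -, -⟩ := hEfacts y hy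
        obtain ⟨hl, -, hfresh⟩ := psi_true_elim hψ
        rw [hRes, Finset.mem_filter] at hy'
        exact zvert_agree hrpos hl hfresh (fun v i h => hy'.2.2 v i h) ρ hρ
      -- (ii) Res y ⊆ E'
      have hResSub : ∀ y ∈ E, Res y ⊆ E' := by
        intro y hy y' hy'
        have hyE := hy
        rw [hE, Finset.mem_filter] at hy
        have hy'G : IsGraph y' := by
          rw [hRes, Finset.mem_filter] at hy'
          exact hy'.2.1
        rw [hE', Finset.mem_filter]
        refine ⟨Finset.mem_univ _, hy'G, ?_⟩
        intro a ha
        have haS : a ∈ S := Finset.mem_of_mem_erase ha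
        have hpa : prec a σm := hprec_max a ha
        obtain ⟨hpτ, hψa, hza⟩ := hy.2.2 a haS
        have hz1 : zvert y' A hA (τf a) = zvert y A hA (τf a) :=
          hAgree y hyE y' hy' (τf a) (prec_trans hpτ hpa)
        have hz2 : zvert y' A hA a = zvert y A hA a := hAgree y hyE y' hy' a hpa
        have hψ' : psi (g := g) y' A hA a = psi (g := g) y A hA a := by
          apply psi_congr y' y A hA (len a) a le_rfl
          intro ρ hρ
          rcases hρ with hρ | hρ
          · exact hAgree y hyE y' hy' ρ (prec_trans hρ hpa)
          · rw [hρ]; exact hz2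
        exact ⟨hpτ, by rw [hψ', hψa], by rw [hz1, hz2, hza]⟩
      -- (iii) disjointness via the restoration map
      have hRestore : ∀ y ∈ E, ∀ y' ∈ Res y,
          (Function.update y' (qc hrpos y' A hA σm).1
            (Function.update (y' (qc hrpos y' A hA σm).1) (qc hrpos y' A hA σm).2
              (zvert y' A hA (τf σm)))) = y := by
        intro y hy y' hy'
        obtain ⟨hyG, hψ, hpτ, hzτ⟩ := hEfacts y hy
        obtain ⟨hl, -, hfresh⟩ := psi_true_elim hψ
        have hqeq : qc hrpos y' A hA σm = qc hrpos y A hA σm := by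
          rw [qc, qc]
          have := hAgree y hy y' hy' (parent σm) (parent_prec hl)
          rw [this]
        have hzv : zvert y' A hA (τf σm) = zvert y A hA σm := by
          rw [hAgree y hy y' hy' (τf σm) hpτ, hzτ]
        have hval : zvert y A hA σm
            = y (qc hrpos y A hA σm).1 (qc hrpos y A hA σm).2 :=
          zvert_succ hrpos y A hA hl
        rw [hqeq, hzv, hval]
        rw [hRes, Finset.mem_filter] at hy'
        funext v i
        rcases eq_or_ne v (qc hrpos y A hA σm).1 with hv | hv
        · subst hv
          rw [Function.update_self]
          rcases eq_or_ne i (qc hrpos y A hA σm).2 with hi | hi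
          · subst hi
            rw [Function.update_self]
          · rw [Function.update_of_ne hi]
            apply hy'.2.2
            intro h
            exact hi (by rw [← h])
        · rw [Function.update_of_ne hv]
          apply hy'.2.2
          intro h
          exact hv (by rw [← h])
      have hdisj : ∀ y1 ∈ E, ∀ y2 ∈ E, y1 ≠ y2 → Disjoint (Res y1) (Res y2) := by
        intro y1 h1 y2 h2 hne
        rw [Finset.disjoint_left]
        intro y' hy1 hy2
        exact hne ((hRestore y1 h1 y' hy1).symm.trans (hRestore y2 h2 y' hy2))
      calc E.card * (n - r) = ∑ _y ∈ E, (n - r) := by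
            rw [Finset.sum_const, smul_eq_mul]
        _ ≤ ∑ y ∈ E, (Res y).card := Finset.sum_le_sum hResCard
        _ = (E.biUnion Res).card := (Finset.card_biUnion hdisj).symm
        _ ≤ E'.card := Finset.card_le_card (Finset.biUnion_subset.mpr hResSub)
    have hcards : S.card = (S.erase σm).card + 1 := by
      rw [Finset.card_erase_of_mem hσm]
      have := Finset.card_pos.mpr hS
      omega
    calc (Finset.univ.filter fun y : Fin n → Fin r → Fin n => IsGraph y ∧ ∀ a ∈ S,
          prec (τf a) a ∧ psi (g := g) y A hA a = true ∧
          zvert y A hA (τf a) = zvert y A hA a).card * (n - r) ^ S.card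
        = ((Finset.univ.filter fun y : Fin n → Fin r → Fin n => IsGraph y ∧ ∀ a ∈ S,
          prec (τf a) a ∧ psi (g := g) y A hA a = true ∧
          zvert y A hA (τf a) = zvert y A hA a).card * (n - r)) *
            (n - r) ^ (S.erase σm).card := by
          rw [hcards, pow_succ]
          ring
      _ ≤ (Finset.univ.filter fun y : Fin n → Fin r → Fin n => IsGraph y ∧
            ∀ a ∈ S.erase σm,
            prec (τf a) a ∧ psi (g := g) y A hA a = true ∧
            zvert y A hA (τf a) = zvert y A hA a).card * (n - r) ^ (S.erase σm).card :=
          Nat.mul_le_mul_right _ claim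
      _ ≤ (Finset.univ.filter fun y : Fin n → Fin r → Fin n => IsGraph y).card :=
          ih (S.erase σm) (Finset.erase_ssubset hσm)

end Core


section Assemble
open Finset
open scoped Classical

theorem count_badA (hrpos : 0 < r) {qt δ : ℝ} (hqt : 0 ≤ qt) (hq : 1 ≤ qt * r) (hδ : 0 ≤ δ)
    (A : Finset (Fin n)) (k : ℕ) (hk1 : (k : ℝ) - 1 ≤ (1 + δ) * A.card) :
    (Finset.univ.filter fun y : Fin n → Fin r → Fin n => IsGraph y ∧
        ¬ Robust (g := g) qt δ (psi y A rfl)).card * (n - r) ^ k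
      ≤ (Fintype.card (Tvert A.card g r)).choose k
          * (Fintype.card (Tvert A.card g r)) ^ k
          * (Finset.univ.filter fun y : Fin n → Fin r → Fin n => IsGraph y).card := by
  classical
  set Tc := Fintype.card (Tvert A.card g r) with hTc
  set Ω := Finset.univ.filter fun y : Fin n → Fin r → Fin n => IsGraph y with hΩ
  -- the big union over (S, τ)
  set EE : (S : Finset (Tvert A.card g r)) → ((a : Tvert A.card g r) → a ∈ S → Tvert A.card g r)
      → Finset (Fin n → Fin r → Fin n) := fun S τ =>
    Finset.univ.filter fun y => IsGraph y ∧ ∀ a (ha : a ∈ S),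
      prec (τ a ha) a ∧ psi (g := g) y A rfl a = true ∧
      zvert y A rfl (τ a ha) = zvert y A rfl a with hEE
  have hcover : (Finset.univ.filter fun y : Fin n → Fin r → Fin n => IsGraph y ∧
      ¬ Robust (g := g) qt δ (psi y A rfl))
      ⊆ (Finset.powersetCard k (Finset.univ : Finset (Tvert A.card g r))).biUnion fun S =>
        (S.pi fun _ => (Finset.univ : Finset (Tvert A.card g r))).biUnion fun τ => EE S τ := by
    intro y hy
    rw [Finset.mem_filter] at hy
    obtain ⟨-, hyG, hnr⟩ := hy
    -- many ones
    have hNbig : ¬ (((Finset.univ.filter fun σ : Tvert A.card g r =>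
        psi (g := g) y A rfl σ = true).card : ℝ) ≤ (1 + δ) * A.card) := by
      intro hN
      exact hnr (robust_of_few hqt hq hδ _ hN)
    push_neg at hNbig
    have hkN : k ≤ (Finset.univ.filter fun σ : Tvert A.card g r =>
        psi (g := g) y A rfl σ = true).card := by
      by_contra hcon
      push_neg at hcon
      have : ((Finset.univ.filter fun σ : Tvert A.card g r =>
          psi (g := g) y A rfl σ = true).card : ℝ) ≤ (k : ℝ) - 1 := by
        have : (Finset.univ.filter fun σ : Tvert A.card g r =>
            psi (g := g) y A rfl σ = true).card ≤ k - 1 := by omega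
        have hk0 : 1 ≤ k := by omega
        calc ((Finset.univ.filter fun σ : Tvert A.card g r =>
            psi (g := g) y A rfl σ = true).card : ℝ) ≤ ((k - 1 : ℕ) : ℝ) := by
              exact_mod_cast this
          _ = (k : ℝ) - 1 := by
              push_cast [Nat.cast_sub hk0]
              ring
      linarith
    obtain ⟨S, hSsub, hScard⟩ := Finset.exists_subset_card_eq hkN
    have hSpsi : ∀ a ∈ S, psi (g := g) y A rfl a = true := by
      intro a ha
      have := hSsub ha
      rw [Finset.mem_filter] at this
      exact this.2
    have hτex : ∀ a (_ : a ∈ S), ∃ σ' : Tvert A.card g r,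
        prec σ' a ∧ zvert y A rfl σ' = zvert y A rfl a := by
      intro a ha
      obtain ⟨-, hmem, -⟩ := psi_true_elim (hSpsi a ha)
      exact mem_Aseen.mp hmem
    refine Finset.mem_biUnion.mpr ⟨S, ?_, ?_⟩
    · rw [Finset.mem_powersetCard]
      exact ⟨Finset.subset_univ _, hScard⟩
    · refine Finset.mem_biUnion.mpr
        ⟨fun a ha => Classical.choose (hτex a ha), ?_, ?_⟩
      · rw [Finset.mem_pi]
        intro a ha
        exact Finset.mem_univ _
      · rw [hEE, Finset.mem_filter]
        refine ⟨Finset.mem_univ _, hyG, ?_⟩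
        intro a ha
        obtain ⟨h1, h2⟩ := Classical.choose_spec (hτex a ha)
        exact ⟨h1, hSpsi a ha, h2⟩
  have hEEbound : ∀ S ∈ Finset.powersetCard k (Finset.univ : Finset (Tvert A.card g r)),
      ∀ τ ∈ S.pi fun _ => (Finset.univ : Finset (Tvert A.card g r)),
      (EE S τ).card * (n - r) ^ k ≤ Ω.card := by
    intro S hS τ hτ
    have hScard : S.card = k := (Finset.mem_powersetCard.mp hS).2
    set τf : Tvert A.card g r → Tvert A.card g r := fun a =>
      if ha : a ∈ S then τ a ha else a with hτf
    have hfe : EE S τ = Finset.univ.filter fun y : Fin n → Fin r → Fin n =>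
        IsGraph y ∧ ∀ a ∈ S, prec (τf a) a ∧ psi (g := g) y A rfl a = true ∧
          zvert y A rfl (τf a) = zvert y A rfl a := by
      rw [hEE]
      apply Finset.filter_congr
      intro y _
      constructor
      · rintro ⟨h1, h2⟩
        refine ⟨h1, fun a ha => ?_⟩
        rw [hτf]
        simp only [dif_pos ha]
        exact h2 a ha
      · rintro ⟨h1, h2⟩
        refine ⟨h1, fun a ha => ?_⟩
        have := h2 a ha
        rw [hτf] at this
        simp only [dif_pos ha] at this
        exact this
    rw [hfe, ← hScard]
    exact core_count hrpos A rfl τf S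
  calc (Finset.univ.filter fun y : Fin n → Fin r → Fin n => IsGraph y ∧
        ¬ Robust (g := g) qt δ (psi y A rfl)).card * (n - r) ^ k
      ≤ ((Finset.powersetCard k (Finset.univ : Finset (Tvert A.card g r))).biUnion fun S =>
          (S.pi fun _ => (Finset.univ : Finset (Tvert A.card g r))).biUnion fun τ =>
            EE S τ).card * (n - r) ^ k :=
        Nat.mul_le_mul_right _ (Finset.card_le_card hcover)
    _ ≤ (∑ S ∈ Finset.powersetCard k (Finset.univ : Finset (Tvert A.card g r)),
          ((S.pi fun _ => (Finset.univ : Finset (Tvert A.card g r))).biUnion fun τ =>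
            EE S τ).card) * (n - r) ^ k :=
        Nat.mul_le_mul_right _ Finset.card_biUnion_le
    _ ≤ (∑ S ∈ Finset.powersetCard k (Finset.univ : Finset (Tvert A.card g r)),
          ∑ τ ∈ S.pi fun _ => (Finset.univ : Finset (Tvert A.card g r)),
            (EE S τ).card) * (n - r) ^ k := by
        apply Nat.mul_le_mul_right
        apply Finset.sum_le_sum
        intro S hS
        exact Finset.card_biUnion_le
    _ = ∑ S ∈ Finset.powersetCard k (Finset.univ : Finset (Tvert A.card g r)),
          ∑ τ ∈ S.pi fun _ => (Finset.univ : Finset (Tvert A.card g r)),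
            ((EE S τ).card * (n - r) ^ k) := by
        rw [Finset.sum_mul]
        apply Finset.sum_congr rfl
        intro S hS
        rw [Finset.sum_mul]
    _ ≤ ∑ S ∈ Finset.powersetCard k (Finset.univ : Finset (Tvert A.card g r)),
          ∑ _τ ∈ S.pi fun _ => (Finset.univ : Finset (Tvert A.card g r)), Ω.card := by
        apply Finset.sum_le_sum
        intro S hS
        apply Finset.sum_le_sum
        intro τ hτ
        exact hEEbound S hS τ hτ
    _ ≤ Tc.choose k * Tc ^ k * Ω.card := by
        refine le_of_eq ?_
        have hpi : ∀ S ∈ Finset.powersetCard k (Finset.univ : Finset (Tvert A.card g r)),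
            (S.pi fun _ => (Finset.univ : Finset (Tvert A.card g r))).card = Tc ^ k := by
          intro S hS
          have hScard : S.card = k := (Finset.mem_powersetCard.mp hS).2
          rw [Finset.card_pi, Finset.prod_const, hScard, Finset.card_univ]
        calc ∑ S ∈ Finset.powersetCard k (Finset.univ : Finset (Tvert A.card g r)),
            ∑ _τ ∈ S.pi fun _ => (Finset.univ : Finset (Tvert A.card g r)), Ω.card
            = ∑ S ∈ Finset.powersetCard k (Finset.univ : Finset (Tvert A.card g r)),
              (S.pi fun _ => (Finset.univ : Finset (Tvert A.card g r))).card * Ω.card := by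
              apply Finset.sum_congr rfl
              intro S hS
              rw [Finset.sum_const, smul_eq_mul]
          _ = ∑ S ∈ Finset.powersetCard k (Finset.univ : Finset (Tvert A.card g r)),
              Tc ^ k * Ω.card := by
              apply Finset.sum_congr rfl
              intro S hS
              rw [hpi S hS]
          _ = (Finset.powersetCard k (Finset.univ : Finset (Tvert A.card g r))).card
              * (Tc ^ k * Ω.card) := by
              rw [Finset.sum_const, smul_eq_mul]
          _ = Tc.choose k * Tc ^ k * Ω.card := by
              rw [Finset.card_powersetCard, Finset.card_univ, ← hTc, mul_assoc]

theorem count_bad (hrpos : 0 < r) {qt δ : ℝ} (hqt : 0 ≤ qt) (hq : 1 ≤ qt * r) (hδ : 0 ≤ δ)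
    (m k : ℕ) (hk1 : (k : ℝ) - 1 ≤ (1 + δ) * m) :
    (Finset.univ.filter fun y : Fin n → Fin r → Fin n => IsGraph y ∧
        ∃ A : Finset (Fin n), A.card = m ∧ ¬ Robust (g := g) qt δ (psi y A rfl)).card
      * (n - r) ^ k
    ≤ n.choose m * ((Fintype.card (Tvert m g r)).choose k
        * (Fintype.card (Tvert m g r)) ^ k
        * (Finset.univ.filter fun y : Fin n → Fin r → Fin n => IsGraph y).card) := by
  classical
  have hcover : (Finset.univ.filter fun y : Fin n → Fin r → Fin n => IsGraph y ∧
      ∃ A : Finset (Fin n), A.card = m ∧ ¬ Robust (g := g) qt δ (psi y A rfl))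
      ⊆ (Finset.powersetCard m (Finset.univ : Finset (Fin n))).biUnion fun A =>
        Finset.univ.filter fun y : Fin n → Fin r → Fin n => IsGraph y ∧
          ¬ Robust (g := g) qt δ (psi y A rfl) := by
    intro y hy
    rw [Finset.mem_filter] at hy
    obtain ⟨-, hyG, A, hAm, hnr⟩ := hy
    refine Finset.mem_biUnion.mpr ⟨A, ?_, ?_⟩
    · rw [Finset.mem_powersetCard_univ]
      exact hAm
    · rw [Finset.mem_filter]
      exact ⟨Finset.mem_univ _, hyG, hnr⟩
  calc (Finset.univ.filter fun y : Fin n → Fin r → Fin n => IsGraph y ∧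
        ∃ A : Finset (Fin n), A.card = m ∧ ¬ Robust (g := g) qt δ (psi y A rfl)).card
      * (n - r) ^ k
      ≤ (∑ A ∈ Finset.powersetCard m (Finset.univ : Finset (Fin n)),
          (Finset.univ.filter fun y : Fin n → Fin r → Fin n => IsGraph y ∧
            ¬ Robust (g := g) qt δ (psi y A rfl)).card) * (n - r) ^ k :=
        Nat.mul_le_mul_right _
          ((Finset.card_le_card hcover).trans Finset.card_biUnion_le)
    _ = ∑ A ∈ Finset.powersetCard m (Finset.univ : Finset (Fin n)),
          ((Finset.univ.filter fun y : Fin n → Fin r → Fin n => IsGraph y ∧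
            ¬ Robust (g := g) qt δ (psi y A rfl)).card * (n - r) ^ k) :=
        Finset.sum_mul _ _ _
    _ ≤ ∑ _A ∈ Finset.powersetCard m (Finset.univ : Finset (Fin n)),
          ((Fintype.card (Tvert m g r)).choose k * (Fintype.card (Tvert m g r)) ^ k
            * (Finset.univ.filter fun y : Fin n → Fin r → Fin n => IsGraph y).card) := by
        apply Finset.sum_le_sum
        intro A hA
        have hAm : A.card = m := Finset.mem_powersetCard_univ.mp hA
        have := count_badA (g := g) hrpos hqt hq hδ A k (by rw [hAm]; exact hk1)
        have hTc : Fintype.card (Tvert A.card g r) = Fintype.card (Tvert m g r) := by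
          rw [hAm]
        rw [← hTc]
        exact this
    _ = n.choose m * ((Fintype.card (Tvert m g r)).choose k
        * (Fintype.card (Tvert m g r)) ^ k
        * (Finset.univ.filter fun y : Fin n → Fin r → Fin n => IsGraph y).card) := by
        rw [Finset.sum_const, smul_eq_mul, Finset.card_powersetCard, Finset.card_univ,
          Fintype.card_fin]

end Assemble


section Analytic

theorem pow_self_le_factorial_mul_exp (m : ℕ) :
    (m : ℝ) ^ m ≤ (m.factorial : ℝ) * Real.exp 1 ^ m := by
  induction m with
  | zero => simp
  | succ m ih =>
    have he1 : (1:ℝ) ≤ Real.exp 1 := by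
      have := Real.add_one_le_exp 1
      linarith
    rcases Nat.eq_zero_or_pos m with hm | hm
    · subst hm
      simp only [pow_one, Nat.factorial, Nat.cast_one]
      push_cast
      linarith
    · have hmpos : (0:ℝ) < m := by exact_mod_cast hm
      have hstep : ((m:ℝ) + 1) ^ m ≤ (m:ℝ) ^ m * Real.exp 1 := by
        have h1 : (1:ℝ) + 1/m ≤ Real.exp (1/m) := by
          have := Real.add_one_le_exp (1/(m:ℝ))
          linarith
        have h2 : ((m:ℝ) + 1) ^ m = (m:ℝ) ^ m * ((1:ℝ) + 1/m) ^ m := by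
          rw [← mul_pow]
          congr 1
          field_simp
        have h3 : ((1:ℝ) + 1/m) ^ m ≤ Real.exp (1/m) ^ m := by
          apply pow_le_pow_left₀ (by positivity) h1
        have h4 : Real.exp (1/(m:ℝ)) ^ m = Real.exp 1 := by
          rw [← Real.exp_nat_mul]
          congr 1
          field_simp
        rw [h2]
        have h5 : (0:ℝ) ≤ (m:ℝ)^m := by positivity
        calc (m:ℝ) ^ m * ((1:ℝ) + 1/m) ^ m ≤ (m:ℝ)^m * Real.exp (1/m) ^ m :=
              mul_le_mul_of_nonneg_left h3 h5
          _ = (m:ℝ)^m * Real.exp 1 := by rw [h4]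
      have hcast : ((m+1 : ℕ) : ℝ) = (m:ℝ) + 1 := by push_cast; ring
      calc ((m+1 : ℕ) : ℝ) ^ (m+1) = ((m:ℝ)+1) * ((m:ℝ)+1)^m := by rw [hcast, pow_succ]; ring
        _ ≤ ((m:ℝ)+1) * ((m:ℝ)^m * Real.exp 1) := by
            apply mul_le_mul_of_nonneg_left hstep (by positivity)
        _ ≤ ((m:ℝ)+1) * ((m.factorial : ℝ) * Real.exp 1 ^ m * Real.exp 1) := by
            apply mul_le_mul_of_nonneg_left _ (by positivity)
            apply mul_le_mul_of_nonneg_right ih (by positivity)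
        _ = (((m+1) * m.factorial : ℕ) : ℝ) * Real.exp 1 ^ (m+1) := by
            push_cast
            ring
        _ = ((m+1).factorial : ℝ) * Real.exp 1 ^ (m+1) := by
            rw [Nat.factorial_succ]

theorem choose_le_two_pow' (a b : ℕ) : a.choose b ≤ 2 ^ a := by
  rcases le_or_gt b a with h | h
  · calc a.choose b ≤ ∑ j ∈ Finset.range (a+1), a.choose j :=
        Finset.single_le_sum (fun j _ => Nat.zero_le _) (Finset.mem_range.mpr (by omega))
      _ = 2 ^ a := Nat.sum_range_choose a
  · rw [Nat.choose_eq_zero_of_lt h]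
    exact Nat.zero_le _

theorem Tc_le (m : ℕ) (hr : 0 < r) :
    Fintype.card (Tvert m g r) ≤ m * ((g+1) * r^g) := by
  have h1 : Fintype.card (Tvert m g r)
      = m * ∑ i : Fin (g+1), Fintype.card (Fin (i:ℕ) → Fin r) := by
    rw [Fintype.card_prod, Fintype.card_fin, Fintype.card_sigma]
  rw [h1]
  apply Nat.mul_le_mul_left
  calc ∑ i : Fin (g+1), Fintype.card (Fin (i:ℕ) → Fin r)
      ≤ ∑ _i : Fin (g+1), r^g := by
        apply Finset.sum_le_sum
        intro i _
        rw [Fintype.card_fun, Fintype.card_fin, Fintype.card_fin]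
        exact Nat.pow_le_pow_right hr (by omega)
    _ = (g+1) * r^g := by
        rw [Finset.sum_const, Finset.card_univ, Fintype.card_fin, smul_eq_mul]

theorem exists_graph (hn : r < n) : ∃ y : Fin n → Fin r → Fin n, IsGraph y := by
  haveI : NeZero n := ⟨by omega⟩
  refine ⟨fun x i => x + ⟨(i:ℕ)+1, by omega⟩, fun x => ⟨?_, ?_⟩⟩
  · intro i j hij
    have h1 : ((⟨(i:ℕ)+1, by omega⟩ : Fin n) : Fin n) = ⟨(j:ℕ)+1, by omega⟩ :=
      add_left_cancel hij
    have h2 : (i:ℕ) + 1 = (j:ℕ) + 1 := congrArg Fin.val h1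
    exact Fin.ext (by omega)
  · intro i he
    have h1 : (⟨(i:ℕ)+1, by omega⟩ : Fin n) = 0 := add_eq_left.mp he
    have h2 : (i:ℕ) + 1 = 0 := by
      have := congrArg Fin.val h1
      simpa using this
    omega

end Analytic

end NRB

open NRB in
/-- **Lemma 2.4.** There are `ε, d, D > 0` such that for every `n > r` and every `m ≥ 1` with
`m ≤ εn`, `P_n(∃ A ⊆ V_n with |A| = m such that ψ(A) is not robust) ≤ D e^{-dm}`. -/
theorem nonrobust_probability_bound
    (r : ℕ) (hr : 1 ≤ r) (q : ℝ) (hq0 : 0 ≤ q) (hq1 : q ≤ 1) (hqr : 1 < q * r)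
    (qt : ℝ) (hqt0 : 0 < qt) (hqtq : qt < q) (hqtr : 1 < qt * r)
    (δ : ℝ) (hδ0 : 0 < δ) (hδ1 : δ < min (qt * r - 1) 1)
    (g : ℕ) (hg : 1 ≤ g)
    (hgrow : 1 + δ < (qt * r - 1 - δ) * (qt * r) ^ (g - 1)) :
    ∃ ε > (0 : ℝ), ∃ d > (0 : ℝ), ∃ D > (0 : ℝ),
      ∀ n : ℕ, r < n →
        ∀ m : ℕ, 1 ≤ m → (m : ℝ) ≤ ε * n →
          graphMeasure n r
              {w | ∃ A : Finset (Fin n), A.card = m ∧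
                ¬ Tvert.Robust (g := g) qt δ (psi w.1 A rfl)} ≤
            ENNReal.ofReal (D * Real.exp (-d * m)) := by
  classical
  have hrpos : 0 < r := hr
  set K : ℕ := (g+1) * r^g with hK
  have hKnat : 1 ≤ K := by
    have : 0 < K := by rw [hK]; positivity
    omega
  have hK1 : (1:ℝ) ≤ (K:ℝ) := by exact_mod_cast hKnat
  set c : ℝ := Real.exp 1 * 2^K * (2*(K:ℝ))^2 with hc
  have hexp1 : (1:ℝ) ≤ Real.exp 1 := by
    have := Real.add_one_le_exp 1
    linarith
  have hc0 : (0:ℝ) < c := by positivity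
  set εd : ℝ := ((Real.exp 1 * c)⁻¹) ^ (δ⁻¹ : ℝ) with hεd
  have hεd0 : 0 < εd := Real.rpow_pos_of_pos (by positivity) _
  set ε : ℝ := min ((2*(r:ℝ)+2)⁻¹) (min ((2*(K:ℝ))⁻¹) εd) with hε
  have hε0 : 0 < ε := lt_min (by positivity) (lt_min (by positivity) hεd0)
  refine ⟨ε, hε0, 1, one_pos, 1, one_pos, ?_⟩
  intro n hn m hm hmn
  set k : ℕ := Nat.floor ((1+δ)*(m:ℝ)) + 1 with hkdef
  have hδ0' : (0:ℝ) ≤ δ := hδ0.le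
  have hδ1' : δ ≤ 1 := by
    have := hδ1
    rw [lt_min_iff] at this
    linarith [this.2]
  have hqt0' : (0:ℝ) ≤ qt := hqt0.le
  have hq1' : (1:ℝ) ≤ qt * r := hqtr.le
  have hm1 : (1:ℝ) ≤ (m:ℝ) := by exact_mod_cast hm
  have hmpos : (0:ℝ) < m := by linarith
  have hfl0 : (0:ℝ) ≤ (1+δ)*(m:ℝ) := by positivity
  have hk1 : (k : ℝ) - 1 ≤ (1 + δ) * m := by
    have h1 : ((Nat.floor ((1+δ)*(m:ℝ)) : ℕ) : ℝ) ≤ (1+δ)*(m:ℝ) := Nat.floor_le hfl0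
    rw [hkdef]
    push_cast
    linarith
  have hkge : (1 + δ) * (m:ℝ) < (k:ℝ) := by
    have := Nat.lt_floor_add_one ((1+δ)*(m:ℝ))
    rw [hkdef]
    push_cast
    linarith
  have hn0 : (0:ℝ) < n := by
    have : 0 < n := by omega
    exact_mod_cast this
  have hεle1 : ε ≤ (2*(r:ℝ)+2)⁻¹ := min_le_left _ _
  have hεle2 : ε ≤ (2*(K:ℝ))⁻¹ := le_trans (min_le_right _ _) (min_le_left _ _)
  have hεle3 : ε ≤ εd := le_trans (min_le_right _ _) (min_le_right _ _)
  have hmn' : (m:ℝ)/n ≤ ε := by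
    rw [div_le_iff₀ hn0]
    calc (m:ℝ) ≤ ε * n := hmn
      _ = ε * n := rfl
  have h1εn : (1:ℝ) ≤ ε * n := le_trans hm1 hmn
  have hn2r : 2*(r:ℝ) + 2 ≤ n := by
    have h2 : ε * n ≤ (2*(r:ℝ)+2)⁻¹ * n := mul_le_mul_of_nonneg_right hεle1 hn0.le
    have h3 : (1:ℝ) ≤ (2*(r:ℝ)+2)⁻¹ * n := le_trans h1εn h2
    have h4 : (0:ℝ) < 2*(r:ℝ)+2 := by positivity
    rw [inv_mul_eq_div, le_div_iff₀ h4] at h3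
    linarith
  have hnr2 : (n:ℝ)/2 ≤ (n:ℝ) - r := by linarith
  have h2Km : 2*(K:ℝ)*m ≤ n := by
    have h2 : ε * n ≤ (2*(K:ℝ))⁻¹ * n := mul_le_mul_of_nonneg_right hεle2 hn0.le
    have h4 : (0:ℝ) < 2*(K:ℝ) := by positivity
    have h5 : (m:ℝ) ≤ (2*(K:ℝ))⁻¹ * n := le_trans hmn h2
    rw [inv_mul_eq_div, le_div_iff₀ h4] at h5
    linarith
  set Tc : ℕ := Fintype.card (Tvert m g r) with hTcd
  have hTcKnat : Tc ≤ K * m := by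
    rw [hTcd, hK]
    calc Fintype.card (Tvert m g r) ≤ m * ((g+1) * r^g) := NRB.Tc_le m hrpos
      _ = (g+1) * r^g * m := by ring
  have hTcK : (Tc:ℝ) ≤ (K:ℝ) * m := by exact_mod_cast hTcKnat
  have hnat := NRB.count_bad (n := n) (g := g) hrpos hqt0' hq1' hδ0' m k hk1
  -- real abbreviations
  set B : ℕ := (Finset.univ.filter fun y : Fin n → Fin r → Fin n => IsGraph y ∧
      ∃ A : Finset (Fin n), A.card = m ∧
        ¬ Tvert.Robust (g := g) qt δ (psi y A rfl)).card with hBdef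
  set W : ℕ := (Finset.univ.filter fun y : Fin n → Fin r → Fin n => IsGraph y).card with hWdef
  have hcastnat : (B:ℝ) * ((n:ℝ) - r)^k ≤ (n.choose m : ℝ) * ((Tc.choose k : ℝ) * (Tc:ℝ)^k * W) := by
    have hcast2 : (((n - r : ℕ) : ℝ)) = (n:ℝ) - r := by
      rw [Nat.cast_sub (by omega)]
    calc (B:ℝ) * ((n:ℝ) - r)^k = ((B * (n-r)^k : ℕ) : ℝ) := by
          push_cast [hcast2]
          ring
      _ ≤ ((n.choose m * (Tc.choose k * Tc ^ k * W) : ℕ) : ℝ) := by exact_mod_cast hnat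
      _ = (n.choose m : ℝ) * ((Tc.choose k : ℝ) * (Tc:ℝ)^k * W) := by push_cast; ring
  -- main analytic bound
  set X : ℝ := 2*(K:ℝ)*m/n with hX
  have hX0 : (0:ℝ) < X := by positivity
  have hX1 : X ≤ 1 := by
    rw [hX, div_le_one hn0]
    linarith
  have hnrpos : (0:ℝ) < (n:ℝ) - r := by linarith
  have hP0 : (0:ℝ) < ((n:ℝ) - r)^k := by positivity
  have hCnm : (n.choose m : ℝ) ≤ ((n:ℝ)/m * Real.exp 1)^m := by
    have hf0 : (0:ℝ) < (m.factorial : ℝ) := by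
      have := m.factorial_pos
      exact_mod_cast this
    have hh1 : (n.choose m : ℝ) ≤ (n:ℝ)^m / m.factorial := by
      have := Nat.choose_le_pow_div (α := ℝ) m n
      simpa using this
    have hh2 := NRB.pow_self_le_factorial_mul_exp m
    have hm0 : (0:ℝ) < (m:ℝ)^m := by positivity
    have hnm0 : (0:ℝ) ≤ (n:ℝ)^m := by positivity
    calc (n.choose m : ℝ) ≤ (n:ℝ)^m / m.factorial := hh1
      _ ≤ ((n:ℝ)^m * Real.exp 1 ^ m) / (m:ℝ)^m := by
          rw [div_le_div_iff₀ hf0 hm0]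
          calc (n:ℝ)^m * (m:ℝ)^m ≤ (n:ℝ)^m * ((m.factorial : ℝ) * Real.exp 1 ^ m) :=
                mul_le_mul_of_nonneg_left hh2 hnm0
            _ = (n:ℝ)^m * Real.exp 1 ^ m * m.factorial := by ring
      _ = ((n:ℝ)/m * Real.exp 1)^m := by
          rw [mul_pow, div_pow]
          ring
  have hCk : (Tc.choose k : ℝ) ≤ (((2:ℝ)^K)^m) := by
    have h1 : Tc.choose k ≤ 2 ^ Tc := NRB.choose_le_two_pow' Tc k
    have h2 : (2:ℕ) ^ Tc ≤ 2 ^ (K * m) := Nat.pow_le_pow_right (by omega) hTcKnat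
    calc (Tc.choose k : ℝ) ≤ ((2:ℕ)^Tc : ℝ) := by exact_mod_cast h1
      _ ≤ ((2:ℕ)^(K*m) : ℝ) := by exact_mod_cast h2
      _ = ((2:ℝ)^K)^m := by
          push_cast
          rw [← pow_mul]
  have hTcX : (Tc:ℝ) ≤ X * ((n:ℝ) - r) := by
    have h1 : X * ((n:ℝ)/2) = (K:ℝ)*m := by
      rw [hX]
      field_simp
    have h2 : X * ((n:ℝ)/2) ≤ X * ((n:ℝ) - r) := mul_le_mul_of_nonneg_left hnr2 hX0.le
    linarith [hTcK]
  have hTck : (Tc:ℝ)^k ≤ X^k * ((n:ℝ) - r)^k := by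
    calc (Tc:ℝ)^k ≤ (X * ((n:ℝ) - r))^k := by
          apply pow_le_pow_left₀ (by positivity) hTcX
      _ = X^k * ((n:ℝ) - r)^k := mul_pow _ _ _
  have hXk : X^k ≤ (X ^ ((1:ℝ)+δ) : ℝ)^m := by
    have h1 : (X:ℝ)^(k:ℕ) = X ^ ((k:ℕ):ℝ) := (Real.rpow_natCast X k).symm
    have h2 : X ^ ((k:ℕ):ℝ) ≤ X ^ (((1:ℝ)+δ)*m) :=
      Real.rpow_le_rpow_of_exponent_ge hX0 hX1 hkge.le
    have h3 : X ^ (((1:ℝ)+δ)*(m:ℝ)) = (X ^ ((1:ℝ)+δ))^(m:ℕ) := by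
      rw [Real.rpow_mul hX0.le, Real.rpow_natCast]
    rw [h1]
    rw [h3] at h2
    exact h2
  set br : ℝ := (n:ℝ)/m * Real.exp 1 * 2^K * X^((1:ℝ)+δ) with hbr
  have hbr0 : (0:ℝ) ≤ br := by
    have := Real.rpow_nonneg hX0.le ((1:ℝ)+δ)
    positivity
  have hbre : br ≤ Real.exp (-1) := by
    have hXsplit : X^((1:ℝ)+δ) = X * X^δ := by
      rw [Real.rpow_add hX0, Real.rpow_one]
    have hnmX : (n:ℝ)/m * X = 2*(K:ℝ) := by
      rw [hX]
      field_simp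
    have hXδ : X^(δ:ℝ) ≤ (2*(K:ℝ)) * ε^(δ:ℝ) := by
      have h1 : X ≤ 2*(K:ℝ)*ε := by
        have : X = 2*(K:ℝ) * ((m:ℝ)/n) := by rw [hX]; ring
        rw [this]
        apply mul_le_mul_of_nonneg_left hmn' (by positivity)
      have h2 : X^(δ:ℝ) ≤ (2*(K:ℝ)*ε)^(δ:ℝ) := Real.rpow_le_rpow hX0.le h1 hδ0'
      have h3 : (2*(K:ℝ)*ε)^(δ:ℝ) = (2*(K:ℝ))^(δ:ℝ) * ε^(δ:ℝ) :=
        Real.mul_rpow (by positivity) hε0.le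
      have h4 : (2*(K:ℝ))^(δ:ℝ) ≤ (2*(K:ℝ)) := by
        calc (2*(K:ℝ))^(δ:ℝ) ≤ (2*(K:ℝ))^((1:ℝ)) :=
              Real.rpow_le_rpow_of_exponent_le (by linarith) hδ1'
          _ = 2*(K:ℝ) := Real.rpow_one _
      calc X^(δ:ℝ) ≤ (2*(K:ℝ))^(δ:ℝ) * ε^(δ:ℝ) := by rw [← h3]; exact h2
        _ ≤ (2*(K:ℝ)) * ε^(δ:ℝ) := by
            apply mul_le_mul_of_nonneg_right h4 (Real.rpow_nonneg hε0.le _)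
    have hεδ : ε^(δ:ℝ) ≤ (Real.exp 1 * c)⁻¹ := by
      have h1 : ε^(δ:ℝ) ≤ εd^(δ:ℝ) := Real.rpow_le_rpow hε0.le hεle3 hδ0'
      have h2 : εd^(δ:ℝ) = (Real.exp 1 * c)⁻¹ := by
        rw [hεd, ← Real.rpow_mul (by positivity), inv_mul_cancel₀ hδ0.ne', Real.rpow_one]
      rw [← h2]
      exact h1
    have hXδ0 : (0:ℝ) ≤ X^(δ:ℝ) := Real.rpow_nonneg hX0.le _
    have hbr2 : br = Real.exp 1 * 2^K * (2*(K:ℝ)) * X^(δ:ℝ) := by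
      rw [hbr, hXsplit, ← hnmX]
      ring
    have step1 : br ≤ Real.exp 1 * 2^K * (2*(K:ℝ)) * ((2*(K:ℝ)) * ε^(δ:ℝ)) := by
      rw [hbr2]
      apply mul_le_mul_of_nonneg_left hXδ (by positivity)
    have step2 : Real.exp 1 * 2^K * (2*(K:ℝ)) * ((2*(K:ℝ)) * ε^(δ:ℝ))
        = c * ε^(δ:ℝ) := by
      rw [hc]
      ring
    have step3 : c * ε^(δ:ℝ) ≤ c * (Real.exp 1 * c)⁻¹ :=
      mul_le_mul_of_nonneg_left hεδ hc0.le
    have step4 : c * (Real.exp 1 * c)⁻¹ = (Real.exp 1)⁻¹ := by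
      field_simp
    rw [Real.exp_neg]
    calc br ≤ c * ε^(δ:ℝ) := by rw [← step2]; exact step1
      _ ≤ c * (Real.exp 1 * c)⁻¹ := step3
      _ = (Real.exp 1)⁻¹ := step4
  have hbrm : br^m ≤ Real.exp (-(m:ℝ)) := by
    calc br^m ≤ (Real.exp (-1))^m := pow_le_pow_left₀ hbr0 hbre m
      _ = Real.exp ((m:ℝ) * (-1)) := (Real.exp_nat_mul _ m).symm
      _ = Real.exp (-(m:ℝ)) := by ring_nf
  have hmain : (n.choose m : ℝ) * ((Tc.choose k : ℝ) * (Tc:ℝ)^k)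
      ≤ Real.exp (-(m:ℝ)) * ((n:ℝ) - r)^k := by
    have hc1 : (0:ℝ) ≤ (Tc.choose k : ℝ) := by positivity
    have hc2 : (0:ℝ) ≤ (Tc:ℝ)^k := by positivity
    have hc3 : (0:ℝ) ≤ ((n:ℝ)/m * Real.exp 1)^m := by positivity
    have hc4 : (0:ℝ) ≤ ((2:ℝ)^K)^m := by positivity
    have hXp0 : (0:ℝ) ≤ (X ^ ((1:ℝ)+δ) : ℝ)^m := by
      have := Real.rpow_nonneg hX0.le ((1:ℝ)+δ)
      positivity
    have h5 : (Tc:ℝ)^k ≤ (X ^ ((1:ℝ)+δ) : ℝ)^m * ((n:ℝ) - r)^k := by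
      calc (Tc:ℝ)^k ≤ X^k * ((n:ℝ) - r)^k := hTck
        _ ≤ (X ^ ((1:ℝ)+δ) : ℝ)^m * ((n:ℝ) - r)^k :=
            mul_le_mul_of_nonneg_right hXk hP0.le
    have h6 : (n.choose m : ℝ) * ((Tc.choose k : ℝ) * (Tc:ℝ)^k)
        ≤ ((n:ℝ)/m * Real.exp 1)^m * (((2:ℝ)^K)^m
            * ((X ^ ((1:ℝ)+δ) : ℝ)^m * ((n:ℝ) - r)^k)) := by
      apply mul_le_mul hCnm _ (by positivity) hc3
      apply mul_le_mul hCk h5 hc2 hc4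
    have h7 : ((n:ℝ)/m * Real.exp 1)^m * (((2:ℝ)^K)^m
        * ((X ^ ((1:ℝ)+δ) : ℝ)^m * ((n:ℝ) - r)^k)) = br^m * ((n:ℝ) - r)^k := by
      rw [hbr]
      rw [mul_pow, mul_pow]
      ring
    calc (n.choose m : ℝ) * ((Tc.choose k : ℝ) * (Tc:ℝ)^k)
        ≤ br^m * ((n:ℝ) - r)^k := by rw [← h7]; exact h6
      _ ≤ Real.exp (-(m:ℝ)) * ((n:ℝ) - r)^k :=
          mul_le_mul_of_nonneg_right hbrm hP0.le
  have hBreal : (B:ℝ) ≤ Real.exp (-(m:ℝ)) * W := by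
    have hW0 : (0:ℝ) ≤ W := Nat.cast_nonneg _
    have h6 : (B:ℝ) * ((n:ℝ) - r)^k ≤ (Real.exp (-(m:ℝ)) * (W:ℝ)) * ((n:ℝ) - r)^k := by
      calc (B:ℝ) * ((n:ℝ) - r)^k
          ≤ (n.choose m : ℝ) * ((Tc.choose k : ℝ) * (Tc:ℝ)^k * W) := hcastnat
        _ = ((n.choose m : ℝ) * ((Tc.choose k : ℝ) * (Tc:ℝ)^k)) * W := by ring
        _ ≤ (Real.exp (-(m:ℝ)) * ((n:ℝ) - r)^k) * W :=
            mul_le_mul_of_nonneg_right hmain hW0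
        _ = (Real.exp (-(m:ℝ)) * (W:ℝ)) * ((n:ℝ) - r)^k := by ring
    exact le_of_mul_le_mul_right h6 hP0
  -- measure computation
  rw [graphMeasure, MeasureTheory.Measure.smul_apply, smul_eq_mul]
  set Sb : Set {y : Fin n → Fin r → Fin n // IsGraph y} :=
    {w | ∃ A : Finset (Fin n), A.card = m ∧
      ¬ Tvert.Robust (g := g) qt δ (psi w.1 A rfl)} with hSb
  have hfin : Sb.Finite := Set.toFinite _
  rw [MeasureTheory.Measure.count_apply_finite _ hfin]
  have hcardSb : hfin.toFinset.card = B := by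
    rw [hBdef]
    apply Finset.card_bij (fun w _ => w.1)
    · intro w hw
      rw [Set.Finite.mem_toFinset] at hw
      rw [Finset.mem_filter]
      exact ⟨Finset.mem_univ _, w.2, hw⟩
    · intro a ha b hb he
      exact Subtype.ext he
    · intro y hy
      rw [Finset.mem_filter] at hy
      refine ⟨⟨y, hy.2.1⟩, ?_, rfl⟩
      rw [Set.Finite.mem_toFinset]
      exact hy.2.2
  have hNatcard : (Nat.card {y : Fin n → Fin r → Fin n // IsGraph y} : ℝ≥0∞)
      = ((W:ℕ) : ℝ≥0∞) := by
    rw [Nat.card_eq_fintype_card, Fintype.card_subtype]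
  have hW0' : W ≠ 0 := by
    obtain ⟨y0, hy0⟩ := NRB.exists_graph (n := n) (r := r) (by omega)
    have : y0 ∈ Finset.univ.filter fun y : Fin n → Fin r → Fin n => IsGraph y := by
      rw [Finset.mem_filter]
      exact ⟨Finset.mem_univ _, hy0⟩
    rw [hWdef]
    have := Finset.card_pos.mpr ⟨y0, this⟩
    omega
  rw [hcardSb, hNatcard]
  have hle : ((B:ℕ) : ℝ≥0∞) ≤ ENNReal.ofReal (Real.exp (-(m:ℝ))) * ((W:ℕ) : ℝ≥0∞) := by
    have h1 : ((B:ℕ) : ℝ≥0∞) = ENNReal.ofReal (B:ℝ) := by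
      rw [ENNReal.ofReal_natCast]
    have h2 : ENNReal.ofReal ((B:ℝ)) ≤ ENNReal.ofReal (Real.exp (-(m:ℝ)) * W) :=
      ENNReal.ofReal_le_ofReal hBreal
    have h3 : ENNReal.ofReal (Real.exp (-(m:ℝ)) * W)
        = ENNReal.ofReal (Real.exp (-(m:ℝ))) * ((W:ℕ) : ℝ≥0∞) := by
      rw [ENNReal.ofReal_mul (by positivity), ENNReal.ofReal_natCast]
    rw [h1, ← h3]
    exact h2
  calc ((W:ℕ) : ℝ≥0∞)⁻¹ * ((B:ℕ) : ℝ≥0∞)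
      ≤ ((W:ℕ) : ℝ≥0∞)⁻¹ * (ENNReal.ofReal (Real.exp (-(m:ℝ))) * ((W:ℕ) : ℝ≥0∞)) :=
        mul_le_mul_right hle _
    _ = ENNReal.ofReal (Real.exp (-(m:ℝ))) * (((W:ℕ) : ℝ≥0∞)⁻¹ * ((W:ℕ) : ℝ≥0∞)) := by
        ring
    _ = ENNReal.ofReal (Real.exp (-(m:ℝ))) := by
        rw [ENNReal.inv_mul_cancel (by exact_mod_cast hW0') (by
          exact ENNReal.natCast_ne_top W), mul_one]
    _ = ENNReal.ofReal (1 * Real.exp (-1 * m)) := by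
        congr 1
        rw [one_mul]
        congr 1
        ring
end

section
/- Fix q̃ > 0 with q̃r > 1, δ ∈ (0, min(q̃r − 1, 1)), and an integer g ≥ 1. Let A ⊆ V_n with |A| = m (for any realization of the graph), and set d = |{σ ∈ T_m : [ψ(A)](σ) = 1}|. If d ≤ (1 + δ)m, then ψ(A) is robust, i.e., every ψ(A)-admissible family is ψ(A)-good. -/
open MeasureTheory
open scoped ENNReal
section AuxRobust

namespace Tvert

variable {m g r : ℕ}

/-- The child of `σ` in direction `j`, when `len σ < g`. -/
def child (σ : Tvert m g r) (j : Fin r) (h : len σ < g) : Tvert m g r :=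
  ⟨σ.1, ⟨⟨len σ + 1, by omega⟩, Fin.snoc σ.2.2 j⟩⟩

lemma len_child (σ : Tvert m g r) (j : Fin r) (h : len σ < g) :
    len (child σ j h) = len σ + 1 := rfl

lemma ext_of {σ σ' : Tvert m g r} (h1 : σ.1 = σ'.1) (h2 : len σ = len σ')
    (h3 : ∀ k (hk : k < len σ) (hk' : k < len σ'), σ.2.2 ⟨k, hk⟩ = σ'.2.2 ⟨k, hk'⟩) :
    σ = σ' := by
  obtain ⟨a, ⟨i, f⟩⟩ := σ
  obtain ⟨a', ⟨i', f'⟩⟩ := σ'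
  simp only [len] at h2 h3
  obtain rfl : a = a' := h1
  obtain rfl : i = i' := Fin.ext h2
  have : f = f' := by
    funext k
    have := h3 k.1 k.2 k.2
    simpa using this
  rw [this]

lemma trunc_child (σ : Tvert m g r) (j : Fin r) (h : len σ < g) :
    trunc (child σ j h) (len σ) = σ := by
  apply ext_of
  · rfl
  · show min (len σ) (len σ + 1) = len σ
    omega
  · intro k hk hk'
    have : (trunc (child σ j h) (len σ)).2.2 ⟨k, hk⟩
        = Fin.snoc (α := fun _ => Fin r) σ.2.2 j (Fin.castSucc ⟨k, hk'⟩) := rfl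
    rw [this, Fin.snoc_castSucc]

/-- The last entry of the path of `σ`, as a natural number. -/
def lastE (σ : Tvert m g r) : ℕ :=
  if h : 0 < len σ then (σ.2.2 ⟨len σ - 1, Nat.sub_lt h Nat.one_pos⟩ : Fin r).1 else 0

lemma lastE_child (σ : Tvert m g r) (j : Fin r) (h : len σ < g) :
    lastE (child σ j h) = j := by
  have hpos : 0 < len (child σ j h) := by rw [len_child]; omega
  rw [lastE, dif_pos hpos]
  have h2 : ((child σ j h).2.2 ⟨len (child σ j h) - 1, Nat.sub_lt hpos Nat.one_pos⟩ : Fin r)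
      = Fin.snoc (α := fun _ => Fin r) σ.2.2 j (Fin.last (len σ)) := rfl
  rw [h2]
  exact congrArg Fin.val (Fin.snoc_last (α := fun _ => Fin r) (x := j) (p := σ.2.2))

lemma child_inj {σ σ' : Tvert m g r} {j j' : Fin r} {h : len σ < g} {h' : len σ' < g}
    (he : child σ j h = child σ' j' h') : σ = σ' ∧ j = j' := by
  have hl : len σ = len σ' := by
    have := congrArg len he
    rw [len_child, len_child] at this
    omega
  have hσ : σ = σ' := by
    rw [← trunc_child σ j h, ← trunc_child σ' j' h', hl, he]
  refine ⟨hσ, ?_⟩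
  have := congrArg lastE he
  rw [lastE_child, lastE_child] at this
  exact Fin.ext this

lemma edge_child (σ : Tvert m g r) (j : Fin r) (h : len σ < g) :
    edge σ (child σ j h) := ⟨len_child σ j h, trunc_child σ j h⟩

open scoped Classical in
lemma card_J_ge (B : Finset (Tvert m g r)) (hB : ∀ σ ∈ B, len σ < g) :
    r * B.card ≤ (J B).card := by
  classical
  have hle : (B ×ˢ (Finset.univ : Finset (Fin r))).card ≤ (J B).card := by
    apply Finset.card_le_card_of_injOn
      (fun p => if h : len p.1 < g then child p.1 p.2 h else p.1)
    · rintro ⟨σ, j⟩ hp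
      rw [Finset.mem_coe, Finset.mem_product] at hp
      have h := hB σ hp.1
      simp only [dif_pos h]
      simp only [J, Finset.mem_coe, Finset.mem_filter, Finset.mem_univ, true_and]
      exact ⟨σ, hp.1, edge_child σ j h⟩
    · rintro ⟨σ, j⟩ hp ⟨σ', j'⟩ hp' heq
      simp only [Finset.coe_product, Set.mem_prod, Finset.mem_coe] at hp hp'
      have h := hB σ hp.1
      have h' := hB σ' hp'.1
      simp only [dif_pos h, dif_pos h'] at heq
      obtain ⟨rfl, rfl⟩ := child_inj heq
      rfl
  rw [Finset.card_product, Finset.card_univ, Fintype.card_fin] at hle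
  rwa [mul_comm] at hle

lemma len_of_mem_J {B : Finset (Tvert m g r)} {σ' : Tvert m g r} (h : σ' ∈ J B) :
    ∃ σ ∈ B, len σ' = len σ + 1 := by
  classical
  simp only [J, Finset.mem_filter, Finset.mem_univ, true_and] at h
  obtain ⟨σ, hσ, hedge⟩ := h
  exact ⟨σ, hσ, hedge.1⟩

end Tvert

end AuxRobust

/-- **Deterministic step of Lemma 2.4.** If the number `d` of sites of `T_m` where `ψ(A)`
equals `1` satisfies `d ≤ (1+δ)m`, then `ψ(A)` is robust. -/
theorem robust_of_few_ones
    (n r g m : ℕ) (hr : 1 ≤ r) (hg : 1 ≤ g) (hn : r < n)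
    (y : Fin n → Fin r → Fin n) (hy : IsGraph y)
    (qt : ℝ) (hqt0 : 0 < qt) (hqtr : 1 < qt * r)
    (δ : ℝ) (hδ0 : 0 < δ) (hδ1 : δ < min (qt * r - 1) 1)
    (A : Finset (Fin n)) (hA : A.card = m)
    (hd : ((Finset.univ.filter fun σ : Tvert m g r => psi y A hA σ = true).card : ℝ) ≤
      (1 + δ) * m) :
    Tvert.Robust qt δ (psi (g := g) y A hA) := by
  classical
  intro i Bs hadm
  refine ⟨hadm, ?_⟩
  obtain ⟨⟨hig, hB0, hchain⟩, _hzero, hb0, hbstep⟩ := hadm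
  set ψ : Tvert m g r → Bool := psi (g := g) y A hA with hψdef
  -- lengths in the family
  have hlen : ∀ j, j ≤ i → ∀ σ ∈ Bs j, Tvert.len σ = j := by
    intro j
    induction j with
    | zero => intro _ σ hσ; exact hB0 σ hσ
    | succ j ih =>
      intro hj σ hσ
      have hσJ := hchain j (by omega) hσ
      obtain ⟨τ, hτ, hedge⟩ := Tvert.len_of_mem_J hσJ
      rw [hedge, ih (by omega) τ hτ]
  have hJcard : ∀ j ≤ i, r * (Bs j).card ≤ (Tvert.J (Bs j)).card := by
    intro j hj
    apply Tvert.card_J_ge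
    intro σ hσ
    rw [hlen j hj σ hσ]
    omega
  -- splitting of J into Jzero and ones
  have hsplit : ∀ B : Finset (Tvert m g r),
      (Tvert.Jzero ψ B).card + ((Tvert.J B).filter fun σ => ψ σ = true).card
        = (Tvert.J B).card := by
    intro B
    have h1 : ((Tvert.J B).filter fun σ => ψ σ = true)
        = ((Tvert.J B).filter fun σ => ¬ (ψ σ = false)) := by
      apply Finset.filter_congr
      intro σ _
      simp
    rw [h1, Tvert.Jzero, Finset.card_filter_add_card_filter_not]
  -- the sum of the ones over the generations is at most d
  have hones : ∀ j ≤ i,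
      (∑ l ∈ Finset.range (j + 1), ((Tvert.J (Bs l)).filter fun σ => ψ σ = true).card)
        ≤ (Finset.univ.filter fun σ : Tvert m g r => ψ σ = true).card := by
    intro j hj
    have hdisj : ∀ l ∈ Finset.range (j + 1), ∀ l' ∈ Finset.range (j + 1), l ≠ l' →
        Disjoint ((Tvert.J (Bs l)).filter fun σ => ψ σ = true)
          ((Tvert.J (Bs l')).filter fun σ => ψ σ = true) := by
      intro l hl l' hl' hne
      rw [Finset.mem_range] at hl hl'
      rw [Finset.disjoint_left]
      intro σ hσ hσ'
      rw [Finset.mem_filter] at hσ hσ'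
      obtain ⟨τ, hτ, he⟩ := Tvert.len_of_mem_J hσ.1
      obtain ⟨τ', hτ', he'⟩ := Tvert.len_of_mem_J hσ'.1
      rw [hlen l (by omega) τ hτ] at he
      rw [hlen l' (by omega) τ' hτ'] at he'
      omega
    rw [← Finset.card_biUnion hdisj]
    apply Finset.card_le_card
    intro σ hσ
    rw [Finset.mem_biUnion] at hσ
    obtain ⟨l, -, hσ⟩ := hσ
    rw [Finset.mem_filter] at hσ ⊢
    exact ⟨Finset.mem_univ σ, hσ.2⟩
  -- main induction
  have hqtr0 : (0 : ℝ) < qt * r := lt_trans one_pos hqtr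
  have key : ∀ j ≤ i, ((qt * r) ^ (j + 1) * m : ℝ) ≤ (Tvert.Jzero ψ (Bs j)).card
      + (qt * r) ^ j * ∑ l ∈ Finset.range (j + 1),
          (((Tvert.J (Bs l)).filter fun σ => ψ σ = true).card : ℝ) := by
    intro j
    induction j with
    | zero =>
      intro _
      have h1 : ((r : ℝ) * (Bs 0).card) ≤ (Tvert.Jzero ψ (Bs 0)).card
          + ((Tvert.J (Bs 0)).filter fun σ => ψ σ = true).card := by
        have := hJcard 0 (Nat.zero_le i)
        have h2 := hsplit (Bs 0)
        push_cast
        rw [← Nat.cast_mul]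
        exact_mod_cast le_of_le_of_eq (Nat.cast_le.mpr this) (by exact_mod_cast h2.symm)
      have hr1 : (1 : ℝ) ≤ r := by exact_mod_cast hr
      simp only [Finset.range_one, Finset.sum_singleton, pow_zero, zero_add, pow_one,
        one_mul]
      have hr0 : (0 : ℝ) ≤ r := by positivity
      nlinarith [h1, mul_le_mul_of_nonneg_right hb0 hr0]
    | succ j ih =>
      intro hj
      have ihj := ih (by omega)
      have hstep := hbstep j (by omega)
      have h1 : ((r : ℝ) * (Bs (j + 1)).card) ≤ (Tvert.Jzero ψ (Bs (j + 1))).card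
          + ((Tvert.J (Bs (j + 1))).filter fun σ => ψ σ = true).card := by
        have h3 := hJcard (j + 1) hj
        have h2 := hsplit (Bs (j + 1))
        push_cast
        rw [← Nat.cast_mul]
        exact_mod_cast le_of_le_of_eq (Nat.cast_le.mpr h3) (by exact_mod_cast h2.symm)
      rw [Finset.sum_range_succ]
      set Q : ℝ := (qt * r) ^ j with hQdef
      have hQ1 : (1 : ℝ) ≤ Q := one_le_pow₀ (le_of_lt hqtr)
      have hpow1 : (qt * r) ^ (j + 1) = Q * (qt * r) := by rw [hQdef, pow_succ]
      have hpow2 : (qt * r) ^ (j + 1 + 1) = Q * (qt * r) * (qt * r) := by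
        rw [pow_succ, hpow1]
      rw [hpow1] at ihj ⊢
      rw [hpow2]
      set a : ℝ := ((Tvert.Jzero ψ (Bs j)).card : ℝ)
      set a' : ℝ := ((Tvert.Jzero ψ (Bs (j + 1))).card : ℝ)
      set b : ℝ := ((Bs (j + 1)).card : ℝ)
      set e : ℝ := (((Tvert.J (Bs (j + 1))).filter fun σ => ψ σ = true).card : ℝ)
      set S : ℝ := ∑ l ∈ Finset.range (j + 1),
          (((Tvert.J (Bs l)).filter fun σ => ψ σ = true).card : ℝ)
      have he0 : (0 : ℝ) ≤ e := Nat.cast_nonneg _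
      have hQqtr1 : (1 : ℝ) ≤ Q * (qt * r) := by nlinarith
      have hr1 : (1 : ℝ) ≤ r := by exact_mod_cast hr
      -- multiply ihj by qt * r
      have hmul : (Q * (qt * r) * m) * (qt * r) ≤ (a + Q * S) * (qt * r) :=
        mul_le_mul_of_nonneg_right ihj (le_of_lt hqtr0)
      have hmul2 : (qt * a) * r ≤ b * r :=
        mul_le_mul_of_nonneg_right hstep (by positivity)
      nlinarith [mul_nonneg (sub_nonneg.mpr hQqtr1) he0]
  -- conclude
  intro j hj
  have hkey := key j hj
  have hsum := hones j hj
  have hS : (∑ l ∈ Finset.range (j + 1),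
      (((Tvert.J (Bs l)).filter fun σ => ψ σ = true).card : ℝ)) ≤ (1 + δ) * m := by
    refine le_trans ?_ hd
    push_cast
    exact_mod_cast Nat.cast_le.mpr hsum
  have hQ0 : (0 : ℝ) ≤ (qt * r) ^ j := by positivity
  have hpow : (qt * r) ^ (j + 1) = (qt * r) ^ j * (qt * r) := pow_succ _ _
  rw [hpow] at hkey
  nlinarith [mul_le_mul_of_nonneg_left hS hQ0]
end

section
/- Fix q̃ > 0 with q̃r > 1 and an integer g ≥ 1. Let A ⊆ V_n with |A| = m (for any realization of the graph), write ψ = ψ(A), and set d = |{σ ∈ T_m : ψ(σ) = 1}|. Then for every ψ-admissible family (B_0,…,B_i) with i < g, and every 0 ≤ j ≤ i, one has |J(B_j) ∩ {ψ = 0}| ≥ (q̃r)^{j+1} m − (q̃r)^j d. -/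
open MeasureTheory
open scoped ENNReal
section Aux
open Tvert

lemma tvert_ext {m g r : ℕ} {σ τ : Tvert m g r} (h1 : σ.1 = τ.1)
    (h2 : Tvert.len σ = Tvert.len τ)
    (h3 : ∀ (l : ℕ) (hl : l < Tvert.len σ) (hl' : l < Tvert.len τ),
      σ.2.2 ⟨l, hl⟩ = τ.2.2 ⟨l, hl'⟩) : σ = τ := by
  obtain ⟨a, i, f⟩ := σ
  obtain ⟨b, jj, gg⟩ := τ
  simp only at h1
  cases h1
  have hij : i = jj := Fin.ext h2
  subst hij
  have : f = gg := by funext l; exact h3 l l.2 l.2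
  subst this
  rfl

def childv {m g r : ℕ} (σ : Tvert m g r) (k : Fin r) : Tvert m g r :=
  ⟨σ.1, ⟨⟨min (Tvert.len σ + 1) g, by omega⟩,
    fun l => if hl : (l : ℕ) < Tvert.len σ then σ.2.2 ⟨l, hl⟩ else k⟩⟩

lemma len_childv {m g r : ℕ} (σ : Tvert m g r) (k : Fin r) (hg : Tvert.len σ < g) :
    Tvert.len (childv σ k) = Tvert.len σ + 1 := by
  simp only [childv, Tvert.len] at hg ⊢
  omega

lemma edge_childv {m g r : ℕ} (σ : Tvert m g r) (k : Fin r) (hg : Tvert.len σ < g) :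
    Tvert.edge σ (childv σ k) := by
  refine ⟨len_childv σ k hg, ?_⟩
  refine tvert_ext rfl ?_ ?_
  · simp only [Tvert.trunc, Tvert.len, childv]
    omega
  · intro l hl hl'
    simp only [Tvert.trunc, childv]
    exact dif_pos hl'

def pathVal {m g r : ℕ} (σ : Tvert m g r) (l : ℕ) : ℕ :=
  if hl : l < Tvert.len σ then (σ.2.2 ⟨l, hl⟩ : ℕ) else 0

lemma pathVal_childv_lt {m g r : ℕ} (σ : Tvert m g r) (k : Fin r) (l : ℕ)
    (hg : Tvert.len σ < g) (h : l < Tvert.len σ) :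
    pathVal (childv σ k) l = (σ.2.2 ⟨l, h⟩ : ℕ) := by
  have hc : l < Tvert.len (childv σ k) := by rw [len_childv _ _ hg]; omega
  rw [pathVal, dif_pos hc]
  show (((childv σ k).2.2 ⟨l, hc⟩ : Fin r) : ℕ) = _
  simp only [childv]
  rw [dif_pos h]

lemma pathVal_childv_eq {m g r : ℕ} (σ : Tvert m g r) (k : Fin r)
    (hg : Tvert.len σ < g) :
    pathVal (childv σ k) (Tvert.len σ) = (k : ℕ) := by
  have hc : Tvert.len σ < Tvert.len (childv σ k) := by rw [len_childv _ _ hg]; omega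
  rw [pathVal, dif_pos hc]
  show (((childv σ k).2.2 ⟨_, hc⟩ : Fin r) : ℕ) = _
  simp only [childv]
  rw [dif_neg (lt_irrefl _)]

lemma childv_inj {m g r : ℕ} {σ τ : Tvert m g r} {k k' : Fin r}
    (hσ : Tvert.len σ < g) (hτ : Tvert.len τ < g) (hlen : Tvert.len σ = Tvert.len τ)
    (h : childv σ k = childv τ k') : σ = τ ∧ k = k' := by
  have h1 : σ.1 = τ.1 := by
    have := congrArg Prod.fst h
    simpa only [childv] using this
  have hp : ∀ l, pathVal (childv σ k) l = pathVal (childv τ k') l := fun l => by rw [h]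
  constructor
  · refine tvert_ext h1 hlen fun l hl hl' => ?_
    have := hp l
    rw [pathVal_childv_lt σ k l hσ hl, pathVal_childv_lt τ k' l hτ hl'] at this
    exact Fin.ext this
  · have := hp (Tvert.len σ)
    rw [pathVal_childv_eq σ k hσ, hlen, pathVal_childv_eq τ k' hτ] at this
    exact Fin.ext this

lemma card_J_ge {m g r : ℕ} (B : Finset (Tvert m g r)) (j : ℕ) (hjg : j < g)
    (hB : ∀ σ ∈ B, Tvert.len σ = j) :
    B.card * r ≤ (Tvert.J B).card := by
  classical
  have key := Finset.card_le_card_of_injOn (f := fun p : Tvert m g r × Fin r => childv p.1 p.2)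
    (s := B ×ˢ Finset.univ) (t := Tvert.J B) ?_ ?_
  · simpa [Finset.card_product] using key
  · rintro ⟨σ, k⟩ hp
    simp only [Finset.mem_coe, Finset.mem_product] at hp
    have hlen := hB σ hp.1
    simp only [Finset.mem_coe, Tvert.J, Finset.mem_filter, Finset.mem_univ, true_and]
    exact ⟨σ, hp.1, edge_childv σ k (by omega)⟩
  · rintro ⟨σ, k⟩ hp ⟨τ, k'⟩ hq h
    simp only [Finset.coe_product, Set.mem_prod, Finset.mem_coe] at hp hq
    obtain ⟨e1, e2⟩ := childv_inj (σ := σ) (τ := τ)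
      (by rw [hB σ hp.1]; omega) (by rw [hB τ hq.1]; omega)
      (by rw [hB σ hp.1, hB τ hq.1]) h
    exact Prod.ext e1 e2

lemma len_of_mem_J {m g r : ℕ} {B : Finset (Tvert m g r)} {j : ℕ}
    (hB : ∀ σ ∈ B, Tvert.len σ = j) {σ' : Tvert m g r} (h : σ' ∈ Tvert.J B) :
    Tvert.len σ' = j + 1 := by
  classical
  simp only [Tvert.J, Finset.mem_filter, Finset.mem_univ, true_and] at h
  obtain ⟨σ, hσ, he⟩ := h
  rw [he.1, hB σ hσ]


lemma family_len {m g r : ℕ} {i : ℕ} {Bs : ℕ → Finset (Tvert m g r)}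
    (hfam : Tvert.IsFamily (g := g) i Bs) : ∀ j ≤ i, ∀ σ ∈ Bs j, Tvert.len σ = j := by
  intro j
  induction j with
  | zero => intro _ σ hσ; exact hfam.2.1 σ hσ
  | succ j ih =>
    intro hj σ hσ
    exact len_of_mem_J (fun τ hτ => ih (by omega) τ hτ) (hfam.2.2 j (by omega) hσ)

end Aux

/-- **Iterated bound in Lemma 2.4.** Writing `ψ = ψ(A)` and `d = |{ψ = 1}|`, every
`ψ`-admissible family `(B_0, …, B_i)` satisfies
`|J(B_j) ∩ {ψ = 0}| ≥ (q̃r)^{j+1} m − (q̃r)^j d` for all `0 ≤ j ≤ i`. -/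
theorem admissible_family_influence_bound
    (n r g m : ℕ) (hr : 1 ≤ r) (hg : 1 ≤ g) (hn : r < n)
    (y : Fin n → Fin r → Fin n) (hy : IsGraph y)
    (qt : ℝ) (hqt0 : 0 < qt) (hqtr : 1 < qt * r)
    (A : Finset (Fin n)) (hA : A.card = m)
    (i : ℕ) (Bs : ℕ → Finset (Tvert m g r))
    (hadm : Tvert.IsAdmissible qt (psi (g := g) y A hA) i Bs)
    (j : ℕ) (hj : j ≤ i) :
    (qt * r) ^ (j + 1) * m -
        (qt * r) ^ j *
          ((Finset.univ.filter fun σ : Tvert m g r => psi y A hA σ = true).card : ℝ) ≤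
      ((Tvert.Jzero (psi y A hA) (Bs j)).card : ℝ) := by
  classical
  set ψ := psi (g := g) y A hA with hψdef
  obtain ⟨hfam, hzero, hB0, hstep⟩ := hadm
  have hig : i < g := hfam.1
  have hlen : ∀ j ≤ i, ∀ σ ∈ Bs j, Tvert.len σ = j := family_len hfam
  set L : ℕ → Finset (Tvert m g r) := fun k =>
    Finset.univ.filter fun σ => ψ σ = true ∧ Tvert.len σ ≤ k with hLdef
  have hLmono : ∀ k, L k ⊆ L (k + 1) := by
    intro k σ hσ
    simp only [hLdef, Finset.mem_filter, Finset.mem_univ, true_and] at hσ ⊢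
    exact ⟨hσ.1, by omega⟩
  have hstepcard : ∀ j ≤ i,
      ((Bs j).card : ℝ) * r + ((L j).card : ℝ)
        ≤ ((Tvert.Jzero ψ (Bs j)).card : ℝ) + ((L (j + 1)).card : ℝ) := by
    intro j hjle
    have hjg : j < g := by omega
    have hBlen := hlen j hjle
    have hcard := card_J_ge (Bs j) j hjg hBlen
    have e1 : (Tvert.Jzero ψ (Bs j)).card
        + ((Tvert.J (Bs j)).filter fun σ => ψ σ = true).card
        = (Tvert.J (Bs j)).card := by
      rw [Tvert.Jzero]
      have h2 := Finset.card_filter_add_card_filter_not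
        (s := Tvert.J (Bs j)) (p := fun σ => ψ σ = false)
      have h3 : ((Tvert.J (Bs j)).filter fun σ => ¬ ψ σ = false)
          = ((Tvert.J (Bs j)).filter fun σ => ψ σ = true) := by
        apply Finset.filter_congr
        intro σ _
        simp
      rw [h3] at h2
      convert h2 using 3
    have e2 : ((Tvert.J (Bs j)).filter fun σ => ψ σ = true) ∪ L j ⊆ L (j + 1) := by
      intro σ hσ
      simp only [Finset.mem_union, Finset.mem_filter, hLdef, Finset.mem_univ, true_and] at hσ ⊢
      rcases hσ with ⟨hJ, ht⟩ | ⟨ht, hl⟩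
      · exact ⟨ht, by rw [len_of_mem_J hBlen hJ]⟩
      · exact ⟨ht, by omega⟩
    have e3 : Disjoint ((Tvert.J (Bs j)).filter fun σ => ψ σ = true) (L j) := by
      rw [Finset.disjoint_left]
      intro σ hσ hσ'
      simp only [Finset.mem_filter, hLdef, Finset.mem_univ, true_and] at hσ hσ'
      have := len_of_mem_J hBlen hσ.1
      omega
    have e4 : ((Tvert.J (Bs j)).filter fun σ => ψ σ = true).card + (L j).card
        ≤ (L (j + 1)).card := by
      rw [← Finset.card_union_of_disjoint e3]
      exact Finset.card_le_card e2
    have : (Bs j).card * r + (L j).card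
        ≤ (Tvert.Jzero ψ (Bs j)).card + (L (j + 1)).card := by omega
    exact_mod_cast this
  have hrpos : (0 : ℝ) ≤ (r : ℝ) := by positivity
  have hqtrpos : (0 : ℝ) < qt * r := lt_trans one_pos hqtr
  have main : ∀ j ≤ i,
      (qt * r) ^ (j + 1) * m - (qt * r) ^ j * ((L (j + 1)).card : ℝ)
        ≤ ((Tvert.Jzero ψ (Bs j)).card : ℝ) := by
    intro j
    induction j with
    | zero =>
      intro hj0
      have h1 := hstepcard 0 (by omega)
      have h2 := mul_le_mul_of_nonneg_right hB0 hrpos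
      have h3 : (0 : ℝ) ≤ ((L 0).card : ℝ) := by positivity
      have h4 : (qt * r) ^ (0 + 1) * (m : ℝ) = qt * m * r := by ring
      have h5 : (qt * r) ^ 0 * ((L (0 + 1)).card : ℝ) = ((L (0 + 1)).card : ℝ) := by ring
      rw [h4, h5]
      linarith
    | succ j ih =>
      intro hj1
      have ihj := ih (by omega)
      have h1 := hstepcard (j + 1) hj1
      have h2 := hstep j (by omega)
      have h3 := mul_le_mul_of_nonneg_left h2 hrpos
      have h4 := mul_le_mul_of_nonneg_left ihj (le_of_lt hqtrpos)
      have hpow : (1 : ℝ) ≤ (qt * r) ^ (j + 1) := one_le_pow₀ (le_of_lt hqtr)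
      have hLle : ((L (j + 1)).card : ℝ) ≤ ((L (j + 2)).card : ℝ) := by
        exact_mod_cast Finset.card_le_card (hLmono (j + 1))
      have key : ((L (j + 2)).card : ℝ) - ((L (j + 1)).card : ℝ)
          ≤ (qt * r) ^ (j + 1) * (((L (j + 2)).card : ℝ) - ((L (j + 1)).card : ℝ)) :=
        le_mul_of_one_le_left (by linarith) hpow
      have hexp : (qt * r) * ((qt * r) ^ (j + 1) * m - (qt * r) ^ j * ((L (j + 1)).card : ℝ))
          = (qt * r) ^ (j + 2) * m - (qt * r) ^ (j + 1) * ((L (j + 1)).card : ℝ) := by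
        ring
      rw [hexp] at h4
      have hcomm : (qt * r) * ((Tvert.Jzero ψ (Bs j)).card : ℝ)
          = (r : ℝ) * (qt * ((Tvert.Jzero ψ (Bs j)).card : ℝ)) := by ring
      rw [hcomm] at h4
      have hcomm2 : ((Bs (j + 1)).card : ℝ) * r = (r : ℝ) * ((Bs (j + 1)).card : ℝ) := by ring
      rw [hcomm2] at h1
      linarith
  have hmain := main j hj
  have hLd : ((L (j + 1)).card : ℝ)
      ≤ ((Finset.univ.filter fun σ : Tvert m g r => psi y A hA σ = true).card : ℝ) := by
    have : L (j + 1) ⊆ Finset.univ.filter fun σ : Tvert m g r => psi y A hA σ = true := by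
      intro σ hσ
      simp only [hLdef, Finset.mem_filter, Finset.mem_univ, true_and] at hσ ⊢
      exact hσ.1
    exact_mod_cast Finset.card_le_card this
  have hpj : (0 : ℝ) ≤ (qt * r) ^ j := by positivity
  have := mul_le_mul_of_nonneg_left hLd hpj
  linarith
end

section
/- Fix a realization of the graph (y_i(x)) and of the variables {B^x_t : x ∈ V_n, 1 ≤ t ≤ T}, and define the time-reversed variables B̂^{x,T}_t = B^x_{T−t} for 0 ≤ t < T. Then for all A, B ⊆ V_n, the event {ξ^A_T ∩ B ≠ ∅} occurs if and only if the event {ξ̂^{B,T}_T ∩ A ≠ ∅} occurs (duality equation, holding pathwise). -/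
open MeasureTheory
open scoped ENNReal
/-- **Duality equation (pathwise).** For a fixed realization of the graph and of the driving
variables, `ξ^A_T ∩ B ≠ ∅` if and only if `ξ̂^{B,T}_T ∩ A ≠ ∅`, where the dual is driven by
the time-reversed variables `B̂^{x,T}_t = B^x_{T-t}`. -/
theorem duality_equation
    (n r T : ℕ) (hr : 1 ≤ r) (hn : r < n) (hT : 1 ≤ T)
    (y : Fin n → Fin r → Fin n) (hy : IsGraph y)
    (B : Fin n → ℕ → Bool)
    (A Bset : Finset (Fin n)) :
    (∃ x ∈ Bset, xi y B (fun v => decide (v ∈ A)) T x = true) ↔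
      (∃ x ∈ A,
        xihat y (fun z t => B z (T - t)) (fun v => decide (v ∈ Bset)) T x = true) := by
  have key : ∀ s, s ≤ T →
      ((∃ x, xi y B (fun v => decide (v ∈ A)) s x = true ∧
          xihat y (fun z t => B z (T - t)) (fun v => decide (v ∈ Bset)) (T - s) x = true) ↔
       (∃ x, xi y B (fun v => decide (v ∈ A)) 0 x = true ∧
          xihat y (fun z t => B z (T - t)) (fun v => decide (v ∈ Bset)) T x = true)) := by
    intro s
    induction s with
    | zero => intro _; exact Iff.rfl
    | succ s ih =>
      intro hs
      rw [← ih (Nat.le_of_succ_le hs)]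
      have h1 : T - s = (T - (s + 1)) + 1 := by omega
      have h2 : T - (T - (s + 1)) = s + 1 := by omega
      constructor
      · rintro ⟨x, hx1, hx2⟩
        simp only [xi, Bool.and_eq_true, decide_eq_true_eq] at hx1
        obtain ⟨hB, i, hi⟩ := hx1
        refine ⟨y x i, hi, ?_⟩
        rw [h1]
        simp only [xihat, decide_eq_true_eq]
        exact ⟨x, i, rfl, hx2, by rw [h2]; exact hB⟩
      · rintro ⟨w, hw1, hw2⟩
        rw [h1] at hw2
        simp only [xihat, decide_eq_true_eq] at hw2
        obtain ⟨z, i, hzi, hz, hBz⟩ := hw2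
        refine ⟨z, ?_, hz⟩
        simp only [xi, Bool.and_eq_true, decide_eq_true_eq]
        rw [h2] at hBz
        exact ⟨hBz, i, hzi ▸ hw1⟩
  have h := key T le_rfl
  rw [Nat.sub_self] at h
  constructor
  · rintro ⟨x, hxB, hx⟩
    obtain ⟨w, hw1, hw2⟩ := h.mp ⟨x, hx, by simpa [xihat] using hxB⟩
    exact ⟨w, by simpa [xi] using hw1, hw2⟩
  · rintro ⟨x, hxA, hx⟩
    obtain ⟨w, hw1, hw2⟩ := h.mpr ⟨x, by simpa [xi] using hxA, hx⟩
    exact ⟨w, by simpa [xihat] using hw2, hw1⟩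
end
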